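/- arXiv:2407.14623 — 9 statements merged into one kernel-verified Lean document; each statement's English description precedes it below -/
import Mathlib

section
/- A rule R on inflow profiles ℝ^n_+ satisfies scale invariance, downstream impartiality, and upstream invariance if and only if there exists α = (α_1,...,α_{n-1}) ∈ [0,1]^{n-1} such that for all e and all i, R_i(e) = α_i e_i + Σ_{k<i} (1-α_k)e_k/(n-k), where α_n := 1. -/
open Finset

/-- Nonnegative inflow profile: the domain `ℝ^n_+`. -/
def Nonneg (n : ℕ) (e : Fin n → ℝ) : Prop := ∀ i, 0 ≤ e i

/-- A rule maps each inflow profile to a nonnegative, feasible, non-wasteful allocation. -/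
def IsRule (n : ℕ) (R : (Fin n → ℝ) → (Fin n → ℝ)) : Prop :=
  ∀ e : Fin n → ℝ, Nonneg n e →
    (∀ i, 0 ≤ R e i) ∧
    (∀ k : Fin n, ∑ i ∈ Finset.Iic k, R e i ≤ ∑ i ∈ Finset.Iic k, e i) ∧
    (∑ i, R e i = ∑ i, e i)

/-- Scale invariance. -/
def ScaleInvariant (n : ℕ) (R : (Fin n → ℝ) → (Fin n → ℝ)) : Prop :=
  ∀ e : Fin n → ℝ, Nonneg n e → ∀ γ : ℝ, 0 ≤ γ →
    ∀ i, R (fun j => γ * e j) i = γ * R e i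

/-- Upstream invariance. -/
def UpstreamInvariant (n : ℕ) (R : (Fin n → ℝ) → (Fin n → ℝ)) : Prop :=
  ∀ e e' : Fin n → ℝ, Nonneg n e → Nonneg n e' →
    ∀ i : Fin n, e i < e' i → (∀ j, j ≠ i → e j = e' j) →
      ∀ k, k < i → R e k = R e' k

/-- Downstream impartiality. -/
def DownstreamImpartial (n : ℕ) (R : (Fin n → ℝ) → (Fin n → ℝ)) : Prop :=
  ∀ e e' : Fin n → ℝ, Nonneg n e → Nonneg n e' →
    ∀ i : Fin n, e i < e' i → (∀ j, j ≠ i → e j = e' j) →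
      (∀ k l, i < k → i < l → e k = e l) →
      ∀ k l, i < k → i < l → R e' k - R e k = R e' l - R e l

/-- Order preservation. -/
def OrderPreserving (n : ℕ) (R : (Fin n → ℝ) → (Fin n → ℝ)) : Prop :=
  ∀ e : Fin n → ℝ, Nonneg n e → ∀ i j : Fin n, i < j → e j ≤ e i → R e j ≤ R e i

/-- Balance: when a single agent `i` (not the last one) has the only positive inflow,
`i` receives the average of the amounts received by the strictly downstream agents. -/
def IsBalanced (n : ℕ) (R : (Fin n → ℝ) → (Fin n → ℝ)) : Prop :=
  ∀ e : Fin n → ℝ, Nonneg n e → ∀ i : Fin n, (i : ℕ) < n - 1 → 0 < e i →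
    (∀ j, j ≠ i → e j = 0) →
    R e i = (1 / ((n : ℝ) - 1 - (i : ℕ))) * ∑ k ∈ Finset.Ioi i, R e k

/-- Progressivity. -/
def Progressive (n : ℕ) (R : (Fin n → ℝ) → (Fin n → ℝ)) : Prop :=
  ∀ e : Fin n → ℝ, Nonneg n e → ∀ i : Fin n, (i : ℕ) < n - 1 → 0 < e i →
    (∀ j, j ≠ i → e j = 0) →
    R e i ≤ (1 / ((n : ℝ) - 1 - (i : ℕ))) * ∑ k ∈ Finset.Ioi i, R e k

/-- Regressivity. -/
def Regressive (n : ℕ) (R : (Fin n → ℝ) → (Fin n → ℝ)) : Prop :=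
  ∀ e : Fin n → ℝ, Nonneg n e → ∀ i : Fin n, (i : ℕ) < n - 1 → 0 < e i →
    (∀ j, j ≠ i → e j = 0) →
    R e i ≥ (1 / ((n : ℝ) - 1 - (i : ℕ))) * ∑ k ∈ Finset.Ioi i, R e k

/-- Equal treatment of equal source inflows: here `s` (resp. `s'`) is the source of `e`
(resp. `e'`), i.e. the smallest index among the first `n-1` agents with positive inflow. -/
def EqualTreatmentOfEqualSourceInflows (n : ℕ) (R : (Fin n → ℝ) → (Fin n → ℝ)) : Prop :=
  ∀ e e' : Fin n → ℝ, Nonneg n e → Nonneg n e' →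
    ∀ s s' : Fin n, (s : ℕ) < n - 1 → (s' : ℕ) < n - 1 →
      0 < e s → 0 < e' s' →
      (∀ j, j < s → e j = 0) → (∀ j, j < s' → e' j = 0) →
      e s = e' s' → R e s = R e' s'

/-- Equal treatment of equal upstream total inflow. -/
def EqualTreatmentOfEqualUpstreamTotalInflow (n : ℕ) (R : (Fin n → ℝ) → (Fin n → ℝ)) : Prop :=
  ∀ e e' : Fin n → ℝ, Nonneg n e → Nonneg n e' →
    ∀ i : Fin n, e i = e' i →
      (∑ j ∈ Finset.Iio i, e j) = (∑ j ∈ Finset.Iio i, e' j) →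
      R e i = R e' i

/-- The Shapley rule: `R^Sh_i(e) = Σ_{j ≤ i} e_j / (n - j + 1)` (with 1-based indices). -/
noncomputable def Sh (n : ℕ) (e : Fin n → ℝ) (i : Fin n) : ℝ :=
  ∑ j ∈ Finset.Iic i, e j / ((n : ℝ) - (j : ℕ))

/-- The no-transfer rule. -/
def NT (n : ℕ) (e : Fin n → ℝ) (i : Fin n) : ℝ := e i

/-- The egalitarian full-transfer rule: `R^EFT_i(e) = Σ_{j < i} e_j / (n - j)` for `i < n`,
and the last agent additionally keeps her own inflow. -/
noncomputable def EFT (n : ℕ) (e : Fin n → ℝ) (i : Fin n) : ℝ :=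
  (∑ j ∈ Finset.Iio i, e j / ((n : ℝ) - 1 - (j : ℕ))) +
    (if (i : ℕ) = n - 1 then e i else 0)

/-- The egalitarian partial-transfer rule:
`R^EPT_i(e) = [1 - (n - i)/(n - 1)] e_i + (1/(n-1)) Σ_{k < i} e_k` (1-based indices). -/
noncomputable def EPT (n : ℕ) (e : Fin n → ℝ) (i : Fin n) : ℝ :=
  (1 - ((n : ℝ) - 1 - (i : ℕ)) / ((n : ℝ) - 1)) * e i +
    (1 / ((n : ℝ) - 1)) * ∑ j ∈ Finset.Iio i, e j

/-- The rule `R^α`: agent `k` keeps a fraction `α k` of her inflow and transfers the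
rest equally among the agents strictly downstream. -/
noncomputable def Ralpha (n : ℕ) (α : Fin n → ℝ) (e : Fin n → ℝ) (i : Fin n) : ℝ :=
  α i * e i + ∑ k ∈ Finset.Iio i, (1 - α k) * e k / ((n : ℝ) - 1 - (k : ℕ))

/-- Admissible parameter vectors: `α ∈ [0,1]^{n-1}` extended by `α_n = 1`. -/
def AlphaOK (n : ℕ) (α : Fin n → ℝ) : Prop :=
  (∀ i, 0 ≤ α i ∧ α i ≤ 1) ∧ (∀ i : Fin n, (i : ℕ) = n - 1 → α i = 1)


namespace RalphaAux

open Finset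

variable {n : ℕ} {R : (Fin n → ℝ) → (Fin n → ℝ)}

lemma split_sum (a : Fin n) (f : Fin n → ℝ) :
    ∑ i, f i = ∑ i ∈ Finset.Iic a, f i + ∑ i ∈ Finset.Ioi a, f i := by
  rw [← Finset.sum_union (Finset.disjoint_left.2 fun x hx hx' =>
    absurd (Finset.mem_Iic.1 hx) (not_le.2 (Finset.mem_Ioi.1 hx')))]
  apply Finset.sum_congr _ fun _ _ => rfl
  ext x
  simp only [Finset.mem_univ, Finset.mem_union, Finset.mem_Iic, Finset.mem_Ioi, true_iff]
  exact le_or_gt x a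

lemma ralpha_trunc (α : Fin n → ℝ) {e e' : Fin n → ℝ} {k : Fin n}
    (h : ∀ j, j ≤ k → e j = e' j) : Ralpha n α e k = Ralpha n α e' k := by
  unfold Ralpha
  rw [h k le_rfl]
  congr 1
  exact Finset.sum_congr rfl fun r hr => by rw [h r (le_of_lt (Finset.mem_Iio.1 hr))]

lemma ralpha_diff (α : Fin n → ℝ) {e e' : Fin n → ℝ} {i : Fin n}
    (h : ∀ j, j ≠ i → e j = e' j) {k : Fin n} (hik : i < k) :
    Ralpha n α e k - Ralpha n α e' k
      = (1 - α i) * e i / ((n : ℝ) - 1 - (i : ℕ))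
        - (1 - α i) * e' i / ((n : ℝ) - 1 - (i : ℕ)) := by
  have hsub : Ralpha n α e k - Ralpha n α e' k
      = ∑ r ∈ Finset.Iio k, ((1 - α r) * e r / ((n:ℝ) - 1 - (r:ℕ))
          - (1 - α r) * e' r / ((n:ℝ) - 1 - (r:ℕ))) := by
    unfold Ralpha
    rw [Finset.sum_sub_distrib, h k (ne_of_gt hik)]
    ring
  rw [hsub, Finset.sum_eq_single i]
  · intro r hr hri
    rw [h r hri]
    ring
  · intro hi
    exact absurd (Finset.mem_Iio.2 hik) hi

lemma ralpha_sum (hn : 0 < n) {α : Fin n → ℝ} (hα : AlphaOK n α) (e : Fin n → ℝ) :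
    ∑ i, Ralpha n α e i = ∑ i, e i := by
  unfold Ralpha
  rw [Finset.sum_add_distrib]
  have hfil : ∀ i : Fin n, Finset.univ.filter (· < i) = Finset.Iio i := by
    intro i; ext x; simp
  have hfil' : ∀ r : Fin n, Finset.univ.filter (r < ·) = Finset.Ioi r := by
    intro r; ext x; simp
  have swap : ∑ i, ∑ r ∈ Finset.Iio i, (1 - α r) * e r / ((n:ℝ) - 1 - (r:ℕ))
      = ∑ r, ((Finset.Ioi r).card : ℝ) * ((1 - α r) * e r / ((n:ℝ) - 1 - (r:ℕ))) := by
    calc ∑ i, ∑ r ∈ Finset.Iio i, (1 - α r) * e r / ((n:ℝ) - 1 - (r:ℕ))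
        = ∑ i, ∑ r, if r < i then (1 - α r) * e r / ((n:ℝ) - 1 - (r:ℕ)) else 0 := by
          refine Finset.sum_congr rfl fun i _ => ?_
          rw [← hfil i, Finset.sum_filter]
      _ = ∑ r, ∑ i, if r < i then (1 - α r) * e r / ((n:ℝ) - 1 - (r:ℕ)) else 0 :=
          Finset.sum_comm
      _ = ∑ r, ((Finset.Ioi r).card : ℝ) * ((1 - α r) * e r / ((n:ℝ) - 1 - (r:ℕ))) := by
          refine Finset.sum_congr rfl fun r _ => ?_
          rw [← Finset.sum_filter, hfil' r, Finset.sum_const, nsmul_eq_mul]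
  rw [swap, ← Finset.sum_add_distrib]
  refine Finset.sum_congr rfl fun k _ => ?_
  rw [Fin.card_Ioi]
  rcases Nat.lt_or_ge (k : ℕ) (n - 1) with hk | hk
  · have hd : ((n - 1 - (k:ℕ) : ℕ) : ℝ) = (n:ℝ) - 1 - (k:ℕ) := by
      have h1 : (k:ℕ) ≤ n - 1 := le_of_lt hk
      have h2 : 1 ≤ n := hn
      push_cast [Nat.cast_sub h1, Nat.cast_sub h2]
      ring
    have hdpos : (0:ℝ) < (n:ℝ) - 1 - (k:ℕ) := by
      rw [← hd]
      exact_mod_cast Nat.sub_pos_of_lt hk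
    rw [hd]
    field_simp
    ring
  · have hk' : (k:ℕ) = n - 1 := le_antisymm (by omega) hk
    have h0 : n - 1 - (k:ℕ) = 0 := by omega
    rw [hα.2 k hk', h0]
    norm_num

lemma zero_prefix (hR : IsRule n R) {e : Fin n → ℝ} (he : Nonneg n e) {k : Fin n}
    (h : ∀ j, j ≤ k → e j = 0) : R e k = 0 := by
  obtain ⟨hpos, hfeas, -⟩ := hR e he
  have h1 : ∑ i ∈ Finset.Iic k, e i = 0 :=
    Finset.sum_eq_zero fun j hj => h j (Finset.mem_Iic.1 hj)
  have h2 : ∑ i ∈ Finset.Iic k, R e i = 0 :=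
    le_antisymm (h1 ▸ hfeas k) (Finset.sum_nonneg fun j _ => hpos j)
  exact (Finset.sum_eq_zero_iff_of_nonneg fun j _ => hpos j).1 h2 k (Finset.mem_Iic.2 le_rfl)

lemma trunc (hR : IsRule n R) (hUI : UpstreamInvariant n R) {e e' : Fin n → ℝ}
    (he : Nonneg n e) (he' : Nonneg n e') {k : Fin n} (h : ∀ j, j ≤ k → e j = e' j) :
    R e k = R e' k := by
  set g : ℕ → (Fin n → ℝ) := fun m j => if (j:ℕ) < m then e j else e' j with hg
  have hnn : ∀ m, Nonneg n (g m) := by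
    intro m j
    by_cases hj : (j:ℕ) < m <;> simp only [hg, hj, if_true, if_false]
    · exact he j
    · exact he' j
  have key : ∀ m, R (g ((k:ℕ) + 1 + m)) k = R (g ((k:ℕ) + 1)) k := by
    intro m
    induction m with
    | zero => rfl
    | succ m ih =>
      rw [← ih]
      have harr : (k:ℕ) + 1 + (m + 1) = ((k:ℕ) + 1 + m) + 1 := by omega
      rw [harr]
      set M := (k:ℕ) + 1 + m with hM
      by_cases hMn : M < n
      · set jM : Fin n := ⟨M, hMn⟩ with hjM
        have hjMval : (jM : ℕ) = M := rfl
        have hdiff : ∀ j : Fin n, j ≠ jM → g (M + 1) j = g M j := by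
          intro j hj
          have hne : (j:ℕ) ≠ M := fun hc => hj (Fin.ext hc)
          simp only [hg]
          by_cases h1 : (j:ℕ) < M
          · rw [if_pos h1, if_pos (by omega)]
          · rw [if_neg h1, if_neg (by omega)]
        have hv1 : g (M + 1) jM = e jM := by simp only [hg, hjMval]; rw [if_pos (by omega)]
        have hv2 : g M jM = e' jM := by simp only [hg, hjMval]; rw [if_neg (by omega)]
        have hkM : k < jM := by rw [Fin.lt_def, hjMval]; omega
        rcases lt_trichotomy (e' jM) (e jM) with hlt | heq | hgt
        · exact (hUI (g M) (g (M + 1)) (hnn M) (hnn (M + 1)) jM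
            (by rw [hv1, hv2]; exact hlt) (fun j hj => (hdiff j hj).symm) k hkM).symm
        · have : g (M + 1) = g M := by
            funext j
            rcases eq_or_ne j jM with hj | hj
            · rw [hj, hv1, hv2, heq]
            · exact hdiff j hj
          rw [this]
        · exact hUI (g (M + 1)) (g M) (hnn (M + 1)) (hnn M) jM
            (by rw [hv1, hv2]; exact hgt) (fun j hj => hdiff j hj) k hkM
      · have : g (M + 1) = g M := by
          funext j
          simp only [hg]
          rw [if_pos (by omega), if_pos (by omega)]
        rw [this]
  have hend1 : g ((k:ℕ) + 1 + n) = e := by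
    funext j
    simp only [hg]
    rw [if_pos (by omega)]
  have hend2 : g ((k:ℕ) + 1) = e' := by
    funext j
    simp only [hg]
    by_cases hj : (j:ℕ) < (k:ℕ) + 1
    · rw [if_pos hj]
      exact h j (by rw [Fin.le_def]; omega)
    · rw [if_neg hj]
  calc R e k = R (g ((k:ℕ) + 1 + n)) k := by rw [hend1]
    _ = R (g ((k:ℕ) + 1)) k := key n
    _ = R e' k := by rw [hend2]

lemma finisher {D : Fin n → ℝ} {j : Fin n}
    (h1 : ∀ k, k ≤ j → D k = 0) (h2 : ∀ k l : Fin n, j < k → j < l → D k = D l)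
    (h3 : ∑ k, D k = 0) : ∀ k, D k = 0 := by
  intro k
  rcases le_or_gt k j with hk | hk
  · exact h1 k hk
  · have hIic : ∑ i ∈ Finset.Iic j, D i = 0 :=
      Finset.sum_eq_zero fun i hi => h1 i (Finset.mem_Iic.1 hi)
    have hIoi : ∑ i ∈ Finset.Ioi j, D i = ((Finset.Ioi j).card : ℝ) * D k := by
      rw [Finset.sum_congr rfl fun l hl => h2 l k (Finset.mem_Ioi.1 hl) hk,
        Finset.sum_const, nsmul_eq_mul]
    have hcard : (Finset.Ioi j).card ≠ 0 :=
      Finset.card_ne_zero_of_mem (Finset.mem_Ioi.2 hk)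
    have hz : ((Finset.Ioi j).card : ℝ) * D k = 0 := by
      have := h3
      rw [split_sum j D, hIic, hIoi, zero_add] at this
      exact this
    rcases mul_eq_zero.1 hz with hc | hD
    · exact absurd hc (by exact_mod_cast hcard)
    · exact hD


lemma main_reverse (hn : 0 < n) {α : Fin n → ℝ}
    (hRe : ∀ e, Nonneg n e → ∀ i, R e i = Ralpha n α e i) :
    ScaleInvariant n R ∧ DownstreamImpartial n R ∧ UpstreamInvariant n R := by
  refine ⟨?_, ?_, ?_⟩
  · intro e he γ hγ i
    have hnn : Nonneg n (fun j => γ * e j) := fun j => mul_nonneg hγ (he j)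
    rw [hRe _ hnn i, hRe e he i]
    unfold Ralpha
    rw [mul_add, Finset.mul_sum]
    congr 1
    · ring
    · exact Finset.sum_congr rfl fun r _ => by ring
  · intro e e' he he' i _ hoff _ k l hik hil
    rw [hRe e' he' k, hRe e he k, hRe e' he' l, hRe e he l]
    have h1 := ralpha_diff α (fun j hj => (hoff j hj).symm) hik
    have h2 := ralpha_diff α (fun j hj => (hoff j hj).symm) hil
    rw [h1, h2]
  · intro e e' he he' i _ hoff k hk
    rw [hRe e he k, hRe e' he' k]
    exact ralpha_trunc α fun j hj => hoff j (ne_of_lt (lt_of_le_of_lt hj hk))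

lemma main_forward (hn : 0 < n) (hR : IsRule n R) (hSI : ScaleInvariant n R)
    (hDI : DownstreamImpartial n R) (hUI : UpstreamInvariant n R) :
    ∃ α : Fin n → ℝ, AlphaOK n α ∧ ∀ e, Nonneg n e → ∀ i, R e i = Ralpha n α e i := by
  set δ : Fin n → Fin n → ℝ := fun i j => if j = i then 1 else 0 with hδ
  have hδnn : ∀ i, Nonneg n (δ i) := by
    intro i j
    by_cases h : j = i <;> simp [hδ, h]
  set α : Fin n → ℝ := fun i => R (δ i) i with hαdef
  have hα0 : ∀ i, 0 ≤ α i := fun i => (hR (δ i) (hδnn i)).1 i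
  have hδlow : ∀ i k : Fin n, k < i → R (δ i) k = 0 := by
    intro i k hk
    refine zero_prefix hR (hδnn i) fun j hj => ?_
    have : j ≠ i := ne_of_lt (lt_of_le_of_lt hj hk)
    simp [hδ, this]
  have hsumIic : ∀ i : Fin n, ∑ j ∈ Finset.Iic i, R (δ i) j = α i := by
    intro i
    rw [Finset.sum_eq_single_of_mem i (Finset.mem_Iic.2 le_rfl)
      fun j hj hji => hδlow i j (lt_of_le_of_ne (Finset.mem_Iic.1 hj) hji)]
  have hδIic : ∀ i : Fin n, ∀ s : Finset (Fin n), i ∈ s → ∑ j ∈ s, δ i j = 1 := by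
    intro i s hs
    simp only [hδ]
    rw [Finset.sum_ite_eq' s i (fun _ => (1:ℝ)), if_pos hs]
  have hα1 : ∀ i, α i ≤ 1 := by
    intro i
    have hfeas := (hR (δ i) (hδnn i)).2.1 i
    rw [hsumIic i, hδIic i _ (Finset.mem_Iic.2 le_rfl)] at hfeas
    exact hfeas
  have hαlast : ∀ i : Fin n, (i:ℕ) = n - 1 → α i = 1 := by
    intro i hi
    have huniv : Finset.Iic i = Finset.univ := by
      apply Finset.eq_univ_of_forall
      intro j
      rw [Finset.mem_Iic, Fin.le_def]
      omega
    have h1 : ∑ j, R (δ i) j = ∑ j, δ i j := (hR (δ i) (hδnn i)).2.2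
    rw [← huniv, hsumIic i, hδIic i _ (Finset.mem_Iic.2 le_rfl)] at h1
    exact h1
  have hαOK : AlphaOK n α := ⟨fun i => ⟨hα0 i, hα1 i⟩, hαlast⟩
  have hscale : ∀ (i : Fin n) (c : ℝ), 0 ≤ c →
      R (fun j => if j = i then c else 0) i = c * α i := by
    intro i c hc
    have hs := hSI (δ i) (hδnn i) c hc i
    have heq : (fun j => c * δ i j) = (fun j => if j = i then c else 0) := by
      funext j
      by_cases h : j = i <;> simp [hδ, h]
    rw [heq] at hs
    exact hs
  have main : ∀ s : ℕ, ∀ E : Fin n → ℝ, Nonneg n E →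
      (∀ k l : Fin n, s ≤ (k:ℕ) → s ≤ (l:ℕ) → E k = E l) → ∀ k, R E k = Ralpha n α E k := by
    intro s
    induction s using Nat.strong_induction_on with
    | _ s IH =>
    have H : ∀ E : Fin n → ℝ, Nonneg n E → ∀ k : Fin n, (k:ℕ) < s → R E k = Ralpha n α E k := by
      intro E hE k hk
      set F : Fin n → ℝ := fun j => if j ≤ k then E j else E k with hF
      have hFnn : Nonneg n F := by
        intro j
        by_cases h : j ≤ k <;> simp only [hF, h, if_true, if_false]
        · exact hE j
        · exact hE k
      have hagree : ∀ j, j ≤ k → E j = F j := fun j hj => by simp [hF, hj]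
      have hval : ∀ a : Fin n, (k:ℕ) ≤ (a:ℕ) → F a = E k := by
        intro a ha
        by_cases h : a ≤ k
        · have : a = k := le_antisymm h (by rw [Fin.le_def]; omega)
          rw [this]
          simp [hF]
        · simp [hF, h]
      have h1 : R E k = R F k := trunc hR hUI hE hFnn hagree
      have h2 : R F k = Ralpha n α F k := by
        refine IH (k:ℕ) hk F hFnn (fun a b ha hb => ?_) k
        rw [hval a ha, hval b hb]
      rw [h1, h2]
      exact ralpha_trunc α fun j hj => (hagree j hj).symm
    rcases s with _ | t
    · -- s = 0 : E is constant; u-chain induction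
      intro E hE hconst
      set c : ℝ := E ⟨0, hn⟩ with hcdef
      have hcnn : 0 ≤ c := hE _
      have hEc : ∀ k, E k = c := fun k => hconst k ⟨0, hn⟩ (Nat.zero_le _) (Nat.zero_le _)
      set u : ℕ → Fin n → ℝ := fun j k => if j ≤ (k:ℕ) then c else 0 with hu
      have hunn : ∀ j, Nonneg n (u j) := by
        intro j k
        by_cases h : j ≤ (k:ℕ) <;> simp [hu, h, hcnn]
      have uzero : ∀ (j : ℕ) (k : Fin n), (k:ℕ) < j → R (u j) k = 0 := by
        intro j k hk
        refine zero_prefix hR (hunn j) fun r hr => ?_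
        rw [Fin.le_def] at hr
        simp only [hu]
        rw [if_neg (by omega)]
      have rzero : ∀ (j : ℕ) (k : Fin n), (k:ℕ) < j → Ralpha n α (u j) k = 0 := by
        intro j k hk
        unfold Ralpha
        have hk0 : u j k = 0 := by simp only [hu]; rw [if_neg (by omega)]
        rw [hk0, mul_zero, zero_add]
        refine Finset.sum_eq_zero fun r hr => ?_
        rw [Finset.mem_Iio, Fin.lt_def] at hr
        have : u j r = 0 := by simp only [hu]; rw [if_neg (by omega)]
        rw [this]
        ring
      have uchain : ∀ m : ℕ, m ≤ n → ∀ k, R (u (n - m)) k = Ralpha n α (u (n - m)) k := by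
        intro m
        induction m with
        | zero =>
          intro _ k
          rw [uzero (n - 0) k (by omega), rzero (n - 0) k (by omega)]
        | succ m ihm =>
          intro hm k
          have hjn : n - (m + 1) < n := by omega
          set j := n - (m + 1) with hjdef
          have hjsucc : j + 1 = n - m := by omega
          set jF : Fin n := ⟨j, hjn⟩ with hjF
          have hjFval : (jF : ℕ) = j := rfl
          have prev : ∀ k', R (u (j + 1)) k' = Ralpha n α (u (j + 1)) k' := by
            rw [hjsucc]
            exact ihm (by omega)
          rcases hcnn.eq_or_lt with hc0 | hc0
          · have : u j = u (j + 1) := by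
              funext r
              simp only [hu, ← hc0]
              split <;> split <;> rfl
            rw [this]
            exact prev k
          · have hoff : ∀ r : Fin n, r ≠ jF → u (j + 1) r = u j r := by
              intro r hr
              have hne : (r:ℕ) ≠ j := fun hc => hr (Fin.ext hc)
              simp only [hu]
              by_cases h1 : j + 1 ≤ (r:ℕ)
              · rw [if_pos h1, if_pos (by omega)]
              · rw [if_neg h1, if_neg (by omega)]
            have hlow : u (j + 1) jF = 0 := by
              simp only [hu, hjFval]
              rw [if_neg (by omega)]
            have hhigh : u j jF = c := by
              simp only [hu, hjFval]
              rw [if_pos le_rfl]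
            have hdi := hDI (u (j + 1)) (u j) (hunn _) (hunn _) jF
              (by rw [hlow, hhigh]; exact hc0) hoff
              (by
                intro a b ha hb
                rw [Fin.lt_def, hjFval] at ha hb
                simp only [hu]
                rw [if_pos (by omega), if_pos (by omega)])
            set D : Fin n → ℝ := fun k' => R (u j) k' - Ralpha n α (u j) k' with hD
            have h1 : ∀ k', k' ≤ jF → D k' = 0 := by
              intro k' hk'
              rw [Fin.le_def, hjFval] at hk'
              rcases lt_or_eq_of_le hk' with hlt | heq
              · simp only [hD]
                rw [uzero j k' hlt, rzero j k' hlt, sub_zero]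
              · have hk'eq : k' = jF := Fin.ext (by rw [hjFval]; exact heq)
                have hRval : R (u j) jF = c * α jF := by
                  have htr : R (u j) jF = R (fun r => if r = jF then c else 0) jF := by
                    refine trunc hR hUI (hunn j) ?_ ?_
                    · intro r
                      by_cases h : r = jF <;> simp [h, hcnn]
                    · intro r hr
                      rw [Fin.le_def, hjFval] at hr
                      rcases lt_or_eq_of_le hr with hlt | heq'
                      · have hne : r ≠ jF := fun hc => by rw [hc, hjFval] at hlt; omega
                        simp only [hu]
                        rw [if_neg (by omega), if_neg hne]
                      · have : r = jF := Fin.ext (by rw [hjFval]; exact heq')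
                        rw [this, hhigh, if_pos rfl]
                  rw [htr]
                  exact hscale jF c hcnn
                have hRalval : Ralpha n α (u j) jF = α jF * c := by
                  unfold Ralpha
                  rw [hhigh]
                  have : ∑ r ∈ Finset.Iio jF, (1 - α r) * u j r / ((n:ℝ) - 1 - (r:ℕ)) = 0 := by
                    refine Finset.sum_eq_zero fun r hr => ?_
                    rw [Finset.mem_Iio, Fin.lt_def, hjFval] at hr
                    have : u j r = 0 := by simp only [hu]; rw [if_neg (by omega)]
                    rw [this]
                    ring
                  rw [this, add_zero]
                simp only [hD]
                rw [hk'eq, hRval, hRalval]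
                ring
            have h2 : ∀ a b : Fin n, jF < a → jF < b → D a = D b := by
              intro a b ha hb
              have e1 := ralpha_diff α (fun r hr => (hoff r hr).symm) ha
              have e2 := ralpha_diff α (fun r hr => (hoff r hr).symm) hb
              have e3 := hdi a b ha hb
              have p1 := prev a
              have p2 := prev b
              simp only [hD]
              linarith
            have h3 : ∑ k', D k' = 0 := by
              simp only [hD]
              rw [Finset.sum_sub_distrib, (hR (u j) (hunn j)).2.2, ralpha_sum hn hαOK (u j),
                sub_self]
            have hfin := finisher h1 h2 h3 k
            simp only [hD] at hfin
            linarith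
      have hEu : E = u (n - n) := by
        funext r
        simp only [hu]
        rw [if_pos (by omega), hEc r]
      intro k
      rw [hEu]
      exact uchain n le_rfl k
    · -- s = t + 1
      intro E hE hconst k
      by_cases hk : (k:ℕ) < t + 1
      · exact H E hE k hk
      · push_neg at hk
        have hs_lt : t + 1 < n := lt_of_le_of_lt hk k.isLt
        set i0 : Fin n := ⟨t, by omega⟩ with hi0
        have hi0val : (i0 : ℕ) = t := rfl
        set ks : Fin n := ⟨t + 1, hs_lt⟩ with hks
        set c := E ks with hcdef
        have hcnn : 0 ≤ c := hE ks
        set E' := Function.update E i0 c with hE'def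
        have hE'at : E' i0 = c := Function.update_self i0 c E
        have hoff : ∀ r, r ≠ i0 → E r = E' r := fun r hr => by
          rw [hE'def, Function.update_of_ne hr]
        have hE'nn : Nonneg n E' := by
          intro r
          rcases eq_or_ne r i0 with h | h
          · rw [h, hE'at]; exact hcnn
          · rw [← hoff r h]; exact hE r
        have hE'val : ∀ r : Fin n, t ≤ (r:ℕ) → E' r = c := by
          intro r hr
          rcases eq_or_ne r i0 with h | h
          · rw [h, hE'at]
          · rw [← hoff r h]
            have hne : (r:ℕ) ≠ t := fun hc => h (Fin.ext (by rw [hi0val]; exact hc))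
            exact hconst r ks (by omega) (by rw [hks]) 
        have hE'const : ∀ a b : Fin n, t ≤ (a:ℕ) → t ≤ (b:ℕ) → E' a = E' b := by
          intro a b ha hb
          rw [hE'val a ha, hE'val b hb]
        have hIH' : ∀ r, R E' r = Ralpha n α E' r :=
          IH t (by omega) E' hE'nn fun a b ha hb => hE'const a b ha hb
        have hEtail : ∀ a b : Fin n, i0 < a → i0 < b → E a = E b := by
          intro a b ha hb
          rw [Fin.lt_def, hi0val] at ha hb
          exact hconst a b (by omega) (by omega)
        have hDIdiff : ∀ a b : Fin n, i0 < a → i0 < b →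
            R E a - R E' a = R E b - R E' b := by
          intro a b ha hb
          rcases lt_trichotomy (E i0) c with h | h | h
          · have hd := hDI E E' hE hE'nn i0 (by rw [hE'at]; exact h) hoff hEtail a b ha hb
            linarith
          · have : E' = E := by
              funext r
              rcases eq_or_ne r i0 with hr | hr
              · rw [hr, hE'at, h]
              · exact (hoff r hr).symm
            rw [this]
            ring
          · have hd := hDI E' E hE'nn hE i0 (by rw [hE'at]; exact h)
              (fun r hr => (hoff r hr).symm)
              (fun a b ha hb => hE'const a b (le_of_lt (by rw [← hi0val]; exact ha))
                (le_of_lt (by rw [← hi0val]; exact hb)))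
              a b ha hb
            linarith
        set D : Fin n → ℝ := fun k' => R E k' - Ralpha n α E k' with hD
        have h1 : ∀ k', k' ≤ i0 → D k' = 0 := by
          intro k' hk'
          rw [Fin.le_def, hi0val] at hk'
          simp only [hD]
          rw [H E hE k' (by omega), sub_self]
        have h2 : ∀ a b : Fin n, i0 < a → i0 < b → D a = D b := by
          intro a b ha hb
          have e1 := ralpha_diff α hoff ha
          have e2 := ralpha_diff α hoff hb
          have e3 := hDIdiff a b ha hb
          have p1 := hIH' a
          have p2 := hIH' b
          simp only [hD]
          linarith
        have h3 : ∑ k', D k' = 0 := by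
          simp only [hD]
          rw [Finset.sum_sub_distrib, (hR E hE).2.2, ralpha_sum hn hαOK E, sub_self]
        have hfin := finisher h1 h2 h3 k
        simp only [hD] at hfin
        linarith
  refine ⟨α, hαOK, ?_⟩
  intro e he i
  set F : Fin n → ℝ := fun j => if j ≤ i then e j else e i with hF
  have hFnn : Nonneg n F := by
    intro j
    by_cases h : j ≤ i <;> simp only [hF, h, if_true, if_false]
    · exact he j
    · exact he i
  have hagree : ∀ j, j ≤ i → e j = F j := fun j hj => by simp [hF, hj]
  have hval : ∀ a : Fin n, (i:ℕ) ≤ (a:ℕ) → F a = e i := by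
    intro a ha
    by_cases h : a ≤ i
    · have : a = i := le_antisymm h (by rw [Fin.le_def]; omega)
      rw [this]
      simp [hF]
    · simp [hF, h]
  have h1 : R e i = R F i := trunc hR hUI he hFnn hagree
  have h2 : R F i = Ralpha n α F i := by
    refine main (i:ℕ) F hFnn (fun a b ha hb => ?_) i
    rw [hval a ha, hval b hb]
  rw [h1, h2]
  exact ralpha_trunc α fun j hj => (hagree j hj).symm

end RalphaAux

/-- Theorem 4 in the paper: a rule satisfies scale invariance, downstream
impartiality and upstream invariance iff it is an `R^α` rule for some `α ∈ [0,1]^{n-1}`. -/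
theorem ralpha_characterization (n : ℕ) (hn : 0 < n)
    (R : (Fin n → ℝ) → (Fin n → ℝ)) (hR : IsRule n R) :
    (ScaleInvariant n R ∧ DownstreamImpartial n R ∧ UpstreamInvariant n R) ↔
    (∃ α : Fin n → ℝ, AlphaOK n α ∧
      ∀ e : Fin n → ℝ, Nonneg n e → ∀ i, R e i = Ralpha n α e i) := by
  constructor
  · rintro ⟨hSI, hDI, hUI⟩
    exact RalphaAux.main_forward hn hR hSI hDI hUI
  · rintro ⟨α, -, hRe⟩
    exact RalphaAux.main_reverse hn hRe
end

section
/- A rule R satisfies scale invariance, downstream impartiality, upstream invariance, and balance if and only if R is the Shapley rule R^Sh, given by R^Sh_i(e) = Σ_{j≤i} e_j/(n-j+1). -/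
open Finset

section ShapleyAux

private lemma fin_denom_pos {n : ℕ} (j : Fin n) : 0 < (n : ℝ) - (j : ℕ) := by
  have h := j.isLt
  have h' : ((j:ℕ) : ℝ) < (n : ℝ) := by exact_mod_cast h
  linarith

private lemma sum_split {n : ℕ} (j : Fin n) (f : Fin n → ℝ) :
    ∑ l, f l = ∑ l ∈ Iic j, f l + ∑ l ∈ Ioi j, f l := by
  rw [← Finset.sum_union (by simp [Finset.disjoint_left])]
  congr 1
  ext l
  simp [le_or_gt]

private lemma sh_congr {n : ℕ} {e e' : Fin n → ℝ} {i : Fin n}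
    (h : ∀ j, j ≤ i → e j = e' j) : Sh n e i = Sh n e' i :=
  Finset.sum_congr rfl (fun j hj => by rw [h j (Finset.mem_Iic.1 hj)])

private lemma sh_zero {n : ℕ} {e : Fin n → ℝ} {i : Fin n}
    (h : ∀ j, j ≤ i → e j = 0) : Sh n e i = 0 :=
  Finset.sum_eq_zero (fun j hj => by rw [h j (Finset.mem_Iic.1 hj)]; simp)

private lemma sh_diff {n : ℕ} {e e' : Fin n → ℝ} {i l : Fin n}
    (hoff : ∀ m, m ≠ i → e m = e' m) (hil : i ≤ l) :
    Sh n e' l - Sh n e l = (e' i - e i) / ((n : ℝ) - (i : ℕ)) := by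
  have h1 : Sh n e' l - Sh n e l = ∑ m ∈ Iic l, (e' m - e m) / ((n:ℝ) - (m:ℕ)) := by
    rw [Sh, Sh, ← Finset.sum_sub_distrib]
    exact Finset.sum_congr rfl (fun m _ => (sub_div _ _ _).symm)
  rw [h1, Finset.sum_eq_single_of_mem i (Finset.mem_Iic.2 hil)]
  intro b _ hb
  rw [hoff b hb]; simp

private lemma sh_sing {n : ℕ} (j : Fin n) (x : ℝ) (l : Fin n) :
    Sh n (fun m => if m = j then x else 0) l = if j ≤ l then x / ((n:ℝ) - (j:ℕ)) else 0 := by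
  rw [Sh]
  by_cases h : j ≤ l
  · rw [if_pos h, Finset.sum_eq_single_of_mem j (Finset.mem_Iic.2 h)]
    · simp
    · intro b _ hb; simp [hb]
  · rw [if_neg h, Finset.sum_eq_zero]
    intro b hb
    have hb' : b ≠ j := by rintro rfl; exact h (Finset.mem_Iic.1 hb)
    simp [hb']

private lemma card_Ioi_cast {n : ℕ} (j : Fin n) :
    (((Finset.Ioi j).card : ℕ) : ℝ) = (n:ℝ) - 1 - (j:ℕ) := by
  rw [Fin.card_Ioi]
  have h1 : 1 + (j:ℕ) ≤ n := by have := j.isLt; omega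
  rw [Nat.sub_sub, Nat.cast_sub h1]
  push_cast; ring

private lemma rule_zero {n : ℕ} {R : (Fin n → ℝ) → (Fin n → ℝ)} (hR : IsRule n R) :
    ∀ l, R (fun _ => (0:ℝ)) l = 0 := by
  have he : Nonneg n (fun _ => (0:ℝ)) := fun _ => le_refl 0
  have hnn := (hR _ he).1
  have hsum := (hR _ he).2.2
  have h : ∑ l, R (fun _ => (0:ℝ)) l = 0 := by simpa using hsum
  exact fun l =>
    (Finset.sum_eq_zero_iff_of_nonneg (fun m _ => hnn m)).1 h l (Finset.mem_univ l)

private lemma prefix_zero {n : ℕ} {R : (Fin n → ℝ) → (Fin n → ℝ)} (hR : IsRule n R)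
    {e : Fin n → ℝ} (he : Nonneg n e) {k : Fin n} (h : ∀ m, m ≤ k → e m = 0) :
    ∀ m, m ≤ k → R e m = 0 := by
  have hnn : ∀ m ∈ Iic k, 0 ≤ R e m := fun m _ => (hR e he).1 m
  have hsum : ∑ m ∈ Iic k, R e m = 0 := by
    have h1 := (hR e he).2.1 k
    have h0 : ∑ m ∈ Iic k, e m = 0 :=
      Finset.sum_eq_zero (fun m hm => h m (Finset.mem_Iic.1 hm))
    refine le_antisymm (by linarith) (Finset.sum_nonneg hnn)
  exact fun m hm =>
    (Finset.sum_eq_zero_iff_of_nonneg hnn).1 hsum m (Finset.mem_Iic.2 hm)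

private lemma upstream_one {n : ℕ} {R : (Fin n → ℝ) → (Fin n → ℝ)}
    (hUI : UpstreamInvariant n R) {e e' : Fin n → ℝ}
    (he : Nonneg n e) (he' : Nonneg n e') (j : Fin n)
    (hoff : ∀ l, l ≠ j → e l = e' l) : ∀ k, k < j → R e k = R e' k := by
  intro k hk
  rcases lt_trichotomy (e j) (e' j) with h | h | h
  · exact hUI e e' he he' j h hoff k hk
  · have heq : e = e' := funext (fun l => by
      by_cases hl : l = j
      · rw [hl, h]
      · exact hoff l hl)
    rw [heq]
  · exact (hUI e' e he' he j h (fun l hl => (hoff l hl).symm) k hk).symm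

end ShapleyAux
section ShapleyAux2

private lemma upstream_trunc {n : ℕ} {R : (Fin n → ℝ) → (Fin n → ℝ)}
    (hUI : UpstreamInvariant n R) (e : Fin n → ℝ) (he : Nonneg n e) (k : Fin n) :
    R e k = R (fun l => if (l:ℕ) ≤ (k:ℕ) then e l else 0) k := by
  set tr : ℕ → (Fin n → ℝ) := fun m l => if (l:ℕ) ≤ (k:ℕ) ∨ m ≤ (l:ℕ) then e l else 0 with htr
  have htrnn : ∀ m, Nonneg n (tr m) := by
    intro m l
    simp only [htr]
    split
    · exact he l
    · exact le_refl 0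
  have hstep : ∀ m, (k:ℕ) < m → R (tr (m+1)) k = R (tr m) k := by
    intro m hm
    by_cases hmn : m < n
    · have hoff : ∀ l, l ≠ (⟨m, hmn⟩ : Fin n) → tr (m+1) l = tr m l := by
        intro l hl
        have hlm : (l:ℕ) ≠ m := fun h => hl (Fin.ext h)
        simp only [htr]
        by_cases h : (l:ℕ) ≤ (k:ℕ) ∨ m ≤ (l:ℕ)
        · rw [if_pos h, if_pos (by omega : (l:ℕ) ≤ (k:ℕ) ∨ m + 1 ≤ (l:ℕ))]
        · rw [if_neg h, if_neg (by omega : ¬((l:ℕ) ≤ (k:ℕ) ∨ m + 1 ≤ (l:ℕ)))]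
      exact upstream_one hUI (htrnn (m+1)) (htrnn m) ⟨m, hmn⟩ hoff k
        (by rw [Fin.lt_def]; exact hm)
    · have heqtr : tr (m+1) = tr m := by
        funext l
        have hln := l.isLt
        simp only [htr]
        by_cases h : (l:ℕ) ≤ (k:ℕ)
        · rw [if_pos (Or.inl h), if_pos (Or.inl h)]
        · rw [if_neg (by omega), if_neg (by omega)]
      rw [heqtr]
  have hchain : ∀ d, R (tr ((k:ℕ)+1+d)) k = R (tr ((k:ℕ)+1)) k := by
    intro d
    induction d with
    | zero => rfl
    | succ d ih => rw [show (k:ℕ)+1+(d+1) = ((k:ℕ)+1+d)+1 by ring, hstep _ (by omega), ih]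
  have h1 : tr ((k:ℕ)+1) = e := by
    funext l
    simp only [htr]
    rcases le_or_gt (l:ℕ) (k:ℕ) with h | h
    · rw [if_pos (Or.inl h)]
    · rw [if_pos (Or.inr (by omega))]
  have h2 : tr ((k:ℕ)+1+n) = fun l : Fin n => if (l:ℕ) ≤ (k:ℕ) then e l else 0 := by
    funext l
    have hln := l.isLt
    simp only [htr]
    by_cases h : (l:ℕ) ≤ (k:ℕ)
    · rw [if_pos (Or.inl h), if_pos h]
    · rw [if_neg (by omega), if_neg h]
  calc R e k = R (tr ((k:ℕ)+1)) k := by rw [h1]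
    _ = R (tr ((k:ℕ)+1+n)) k := (hchain n).symm
    _ = _ := by rw [h2]

private lemma upstream_dep {n : ℕ} {R : (Fin n → ℝ) → (Fin n → ℝ)}
    (hUI : UpstreamInvariant n R) {e e' : Fin n → ℝ}
    (he : Nonneg n e) (he' : Nonneg n e') (k : Fin n)
    (hagree : ∀ l, l ≤ k → e l = e' l) : R e k = R e' k := by
  rw [upstream_trunc hUI e he k, upstream_trunc hUI e' he' k]
  congr 1
  funext l
  by_cases h : (l:ℕ) ≤ (k:ℕ)
  · rw [if_pos h, if_pos h, hagree l h]
  · rw [if_neg h, if_neg h]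

end ShapleyAux2
section ShapleyAux3

private lemma rule_sing {n : ℕ} {R : (Fin n → ℝ) → (Fin n → ℝ)} (hR : IsRule n R)
    (hDI : DownstreamImpartial n R) (hB : IsBalanced n R)
    (j : Fin n) (x : ℝ) (hx : 0 ≤ x) :
    ∀ l, R (fun m => if m = j then x else 0) l = Sh n (fun m => if m = j then x else 0) l := by
  set e : Fin n → ℝ := fun m => if m = j then x else 0 with hedef
  have he : Nonneg n e := fun m => by
    simp only [hedef]; split
    · exact hx
    · exact le_refl 0
  rcases eq_or_lt_of_le hx with h0 | hxpos
  · have heq : e = fun _ => 0 := by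
      funext m
      simp only [hedef]; split <;> simp [← h0]
    intro l; rw [heq, rule_zero hR, sh_zero (fun _ _ => rfl)]
  have hej : e j = x := by simp [hedef]
  have hlow : ∀ l, l < j → R e l = 0 := by
    intro l hl
    refine prefix_zero hR he (k := l) ?_ l le_rfl
    intro m hm
    have : m ≠ j := ne_of_lt (lt_of_le_of_lt hm hl)
    simp [hedef, this]
  have hsum : ∑ l, R e l = x := by
    rw [(hR e he).2.2]
    simp only [hedef]
    rw [Finset.sum_ite_eq' Finset.univ j (fun _ => x)]
    simp
  have hIio : ∑ l ∈ Iio j, R e l = 0 :=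
    Finset.sum_eq_zero (fun l hl => hlow l (Finset.mem_Iio.1 hl))
  have hIic : ∑ l ∈ Iic j, R e l = R e j := by
    rw [← Finset.Iio_insert j, Finset.sum_insert (by simp), hIio, add_zero]
  rcases (Finset.Ioi j).eq_empty_or_nonempty with hemp | ⟨l0, hl0⟩
  · -- j is the last agent
    have hlast : (j:ℕ) + 1 = n := by
      by_contra hcon
      have hjn : (j:ℕ) + 1 < n := by have := j.isLt; omega
      have : (⟨(j:ℕ)+1, hjn⟩ : Fin n) ∈ Finset.Ioi j := by
        rw [Finset.mem_Ioi]; rw [Fin.lt_def]; simp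
      rw [hemp] at this; simp at this
    have hRj : R e j = x := by
      have := sum_split j (R e)
      rw [hemp, Finset.sum_empty, add_zero, hIic, hsum] at this
      linarith
    intro l
    rcases lt_trichotomy l j with h | h | h
    · rw [hlow l h, sh_zero]
      intro m hm
      have : m ≠ j := ne_of_lt (lt_of_le_of_lt hm h)
      simp [hedef, this]
    · rw [h, hRj, sh_sing, if_pos le_rfl]
      have : (n:ℝ) - (j:ℕ) = 1 := by
        have hcast : ((j:ℕ):ℝ) + 1 = (n:ℝ) := by exact_mod_cast hlast
        linarith
      rw [this, div_one]
    · exfalso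
      have : l ∈ Finset.Ioi j := Finset.mem_Ioi.2 h
      rw [hemp] at this; simp at this
  · -- there are downstream agents
    have hjl0 : j < l0 := Finset.mem_Ioi.1 hl0
    have hjlt : (j:ℕ) < n - 1 := by
      have h1 : (j:ℕ) < (l0:ℕ) := hjl0
      have h2 := l0.isLt
      omega
    have hconst : ∀ k l, j < k → j < l → R e k = R e l := by
      intro k l hk hl
      have h := hDI (fun _ => 0) e (fun _ => le_refl 0) he j
        (by rw [hej]; exact hxpos) (fun m hm => by simp [hedef, hm])
        (fun _ _ _ _ => rfl) k l hk hl
      rw [rule_zero hR, rule_zero hR] at h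
      linarith
    set c := R e l0 with hc
    have hsumIoi : ∑ k ∈ Ioi j, R e k = (((Ioi j).card : ℕ) : ℝ) * c := by
      rw [Finset.sum_congr rfl (fun k hk => hconst k l0 (Finset.mem_Ioi.1 hk) hjl0),
        Finset.sum_const, nsmul_eq_mul]
    have hcardr : (((Ioi j).card : ℕ) : ℝ) = (n:ℝ) - 1 - (j:ℕ) := card_Ioi_cast j
    have hcne : (n:ℝ) - 1 - (j:ℕ) ≠ 0 := by
      have h2 : ((j:ℕ):ℝ) + 2 ≤ (n:ℝ) := by exact_mod_cast (by omega : (j:ℕ) + 2 ≤ n)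
      linarith
    have hRj : R e j = c := by
      have hb := hB e he j hjlt (by rw [hej]; exact hxpos) (fun m hm => by simp [hedef, hm])
      rw [hsumIoi, hcardr] at hb
      rw [hb, one_div, ← mul_assoc, inv_mul_cancel₀ hcne, one_mul]
    have hcval : c = x / ((n:ℝ) - (j:ℕ)) := by
      have hs := sum_split j (R e)
      rw [hsum, hIic, hRj, hsumIoi, hcardr] at hs
      have hq : (n:ℝ) - (j:ℕ) ≠ 0 := ne_of_gt (fin_denom_pos j)
      field_simp
      linarith [hs]
    intro l
    rcases lt_trichotomy l j with h | h | h
    · rw [hlow l h, sh_zero]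
      intro m hm
      have : m ≠ j := ne_of_lt (lt_of_le_of_lt hm h)
      simp [hedef, this]
    · rw [h, hRj, hcval, sh_sing, if_pos le_rfl]
    · rw [hconst l l0 h hjl0, ← hc, hcval, sh_sing, if_pos h.le]

end ShapleyAux3
section ShapleyAux4

private lemma step_lemma {n : ℕ} {R : (Fin n → ℝ) → (Fin n → ℝ)} (hR : IsRule n R)
    (hDI : DownstreamImpartial n R) (hUI : UpstreamInvariant n R)
    {e g : Fin n → ℝ} (he : Nonneg n e) (hg : Nonneg n g)
    (j : Fin n) (hoff : ∀ l, l ≠ j → e l = g l)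
    (hconst : ∀ k l, j < k → j < l → e k = e l)
    (hgSh : ∀ l, R g l = Sh n g l) (hej : R e j = Sh n e j) :
    ∀ l, R e l = Sh n e l := by
  by_cases heg : e j = g j
  · have heq : e = g := by
      funext l
      by_cases hl : l = j
      · rw [hl, heg]
      · exact hoff l hl
    intro l; rw [heq]; exact hgSh l
  have hlow : ∀ l, l < j → R e l = R g l := upstream_one hUI he hg j hoff
  have hlowsh : ∀ l, l < j → Sh n g l = Sh n e l := by
    intro l hl
    exact sh_congr (fun m hm => (hoff m (ne_of_lt (lt_of_le_of_lt hm hl))).symm)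
  have hgconst : ∀ k l, j < k → j < l → g k = g l := by
    intro k l hk hl
    rw [← hoff k (ne_of_gt hk), ← hoff l (ne_of_gt hl)]
    exact hconst k l hk hl
  have hD : ∀ k l, j < k → j < l → R e k - R g k = R e l - R g l := by
    intro k l hk hl
    rcases lt_or_gt_of_ne heg with h | h
    · have h1 := hDI e g he hg j h hoff hconst k l hk hl
      linarith
    · have h1 := hDI g e hg he j h (fun m hm => (hoff m hm).symm) hgconst k l hk hl
      linarith
  have hdiff_univ : ∑ l, (R e l - R g l) = e j - g j := by
    rw [Finset.sum_sub_distrib, (hR e he).2.2, (hR g hg).2.2, ← Finset.sum_sub_distrib,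
      Finset.sum_eq_single_of_mem j (Finset.mem_univ j)]
    intro b _ hb
    rw [hoff b hb]; ring
  have hshj : Sh n e j - Sh n g j = (e j - g j) / ((n:ℝ) - (j:ℕ)) := by
    have := sh_diff (e := g) (e' := e) (i := j) (l := j) (fun m hm => (hoff m hm).symm) le_rfl
    exact this
  rcases (Finset.Ioi j).eq_empty_or_nonempty with hemp | ⟨l0, hl0⟩
  · intro l
    rcases lt_trichotomy l j with h | h | h
    · rw [hlow l h, hgSh l, hlowsh l h]
    · rw [h]; exact hej
    · exfalso
      have : l ∈ Finset.Ioi j := Finset.mem_Ioi.2 h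
      rw [hemp] at this; simp at this
  · have hjl0 : j < l0 := Finset.mem_Ioi.1 hl0
    set d := R e l0 - R g l0 with hd
    have hsumIoi : ∑ l ∈ Ioi j, (R e l - R g l) = (((Ioi j).card : ℕ) : ℝ) * d := by
      rw [Finset.sum_congr rfl (fun l hl => hD l l0 (Finset.mem_Ioi.1 hl) hjl0),
        Finset.sum_const, nsmul_eq_mul]
    have hIic : ∑ l ∈ Iic j, (R e l - R g l) = (e j - g j) / ((n:ℝ) - (j:ℕ)) := by
      rw [← Finset.Iio_insert j, Finset.sum_insert (by simp)]
      have h0 : ∑ l ∈ Iio j, (R e l - R g l) = 0 :=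
        Finset.sum_eq_zero (fun l hl => by rw [hlow l (Finset.mem_Iio.1 hl)]; ring)
      rw [h0, hej, hgSh j, hshj, add_zero]
    have hcardr : (((Ioi j).card : ℕ) : ℝ) = (n:ℝ) - 1 - (j:ℕ) := card_Ioi_cast j
    have hcpos : (0:ℝ) < (((Ioi j).card : ℕ) : ℝ) := by
      exact_mod_cast Finset.card_pos.2 ⟨l0, hl0⟩
    have hcne : ((n:ℝ) - 1 - (j:ℕ)) ≠ 0 := by rw [← hcardr]; exact ne_of_gt hcpos
    have hq : (n:ℝ) - (j:ℕ) ≠ 0 := ne_of_gt (fin_denom_pos j)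
    have hsplit := sum_split j (fun l => R e l - R g l)
    rw [hdiff_univ, hIic, hsumIoi, hcardr] at hsplit
    have hdval : d = (e j - g j) / ((n:ℝ) - (j:ℕ)) := by
      have key : ((n:ℝ) - 1 - (j:ℕ)) * d = ((n:ℝ) - 1 - (j:ℕ)) * ((e j - g j) / ((n:ℝ) - (j:ℕ))) := by
        have hgoal : ((n:ℝ) - 1 - (j:ℕ)) * ((e j - g j) / ((n:ℝ) - (j:ℕ)))
            = (e j - g j) - (e j - g j) / ((n:ℝ) - (j:ℕ)) := by
          field_simp
          ring
        rw [hgoal]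
        linarith
      exact mul_left_cancel₀ hcne key
    intro l
    rcases lt_trichotomy l j with h | h | h
    · rw [hlow l h, hgSh l, hlowsh l h]
    · rw [h]; exact hej
    · have h1 : R e l - R g l = d := hD l l0 h hjl0
      have h2 : Sh n e l - Sh n g l = (e j - g j) / ((n:ℝ) - (j:ℕ)) :=
        sh_diff (e := g) (e' := e) (i := j) (fun m hm => (hoff m hm).symm) h.le
      rw [hgSh l] at h1
      linarith [hdval]

end ShapleyAux4
section ShapleyAux5

private lemma rule_zprof {n : ℕ} {R : (Fin n → ℝ) → (Fin n → ℝ)} (hR : IsRule n R)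
    (hDI : DownstreamImpartial n R) (hUI : UpstreamInvariant n R) (hB : IsBalanced n R) :
    ∀ K : ℕ, ∀ m : ℕ, n ≤ m + K → ∀ t : ℝ, 0 ≤ t →
      ∀ l, R (fun l : Fin n => if m ≤ (l:ℕ) then t else 0) l
        = Sh n (fun l : Fin n => if m ≤ (l:ℕ) then t else 0) l := by
  intro K
  induction K with
  | zero =>
    intro m hm t ht l
    have heq : (fun l : Fin n => if m ≤ (l:ℕ) then t else 0) = fun _ => (0:ℝ) := by
      funext l
      exact if_neg (by have := l.isLt; omega)
    rw [heq, rule_zero hR, sh_zero (fun _ _ => rfl)]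
  | succ K ih =>
    intro m hm t ht
    by_cases hmn : n ≤ m + K
    · exact ih m hmn t ht
    · have hmlt : m < n := by omega
      set J : Fin n := ⟨m, hmlt⟩ with hJ
      set e : Fin n → ℝ := fun l : Fin n => if m ≤ (l:ℕ) then t else 0 with hedef
      set g : Fin n → ℝ := fun l : Fin n => if m + 1 ≤ (l:ℕ) then t else 0 with hgdef
      have he : Nonneg n e := fun l => by
        simp only [hedef]; split
        · exact ht
        · exact le_refl 0
      have hg : Nonneg n g := fun l => by
        simp only [hgdef]; split
        · exact ht
        · exact le_refl 0
      have hgSh : ∀ l, R g l = Sh n g l := ih (m+1) (by omega) t ht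
      have hoff : ∀ l, l ≠ J → e l = g l := by
        intro l hl
        have hlm : (l:ℕ) ≠ m := fun h => hl (Fin.ext h)
        simp only [hedef, hgdef]
        by_cases h : m ≤ (l:ℕ)
        · rw [if_pos h, if_pos (by omega)]
        · rw [if_neg h, if_neg (by omega)]
      have hconst : ∀ k l, J < k → J < l → e k = e l := by
        intro k l hk hl
        have hk' : m < (k:ℕ) := hk
        have hl' : m < (l:ℕ) := hl
        simp only [hedef]
        rw [if_pos (by omega), if_pos (by omega)]
      have hej : R e J = Sh n e J := by
        have hsnn : Nonneg n (fun l : Fin n => if l = J then t else 0) := fun l => by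
          by_cases h : l = J
          · simp [h, ht]
          · simp [h]
        have hagree : ∀ l, l ≤ J → e l = (fun l : Fin n => if l = J then t else 0) l := by
          intro l hl
          have hl' : (l:ℕ) ≤ m := hl
          simp only [hedef]
          rcases eq_or_lt_of_le hl' with h | h
          · rw [if_pos (le_of_eq h.symm), if_pos (Fin.ext h)]
          · rw [if_neg (by omega), if_neg (by
              intro hcon
              rw [hcon] at h
              exact absurd h (lt_irrefl _))]
        calc R e J = R (fun l : Fin n => if l = J then t else 0) J :=
              upstream_dep hUI he hsnn J hagree
          _ = Sh n (fun l : Fin n => if l = J then t else 0) J := rule_sing hR hDI hB J t ht J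
          _ = Sh n e J := sh_congr (fun l hl => (hagree l hl).symm)
      exact step_lemma hR hDI hUI he hg J hoff hconst hgSh hej

private lemma rule_q {n : ℕ} {R : (Fin n → ℝ) → (Fin n → ℝ)} (hR : IsRule n R)
    (hDI : DownstreamImpartial n R) (hUI : UpstreamInvariant n R) (hB : IsBalanced n R) :
    ∀ j : ℕ, ∀ e : Fin n → ℝ, Nonneg n e →
      (∀ l m : Fin n, j ≤ (l:ℕ) → j ≤ (m:ℕ) → e l = e m) →
      ∀ l, R e l = Sh n e l := by
  intro j
  induction j with
  | zero =>
    intro e he hc l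
    have hpos : 0 < n := by have := l.isLt; omega
    set t := e ⟨0, hpos⟩ with htdef
    have heq : e = fun l : Fin n => if 0 ≤ (l:ℕ) then t else 0 := by
      funext l
      rw [if_pos (Nat.zero_le _)]
      exact hc l ⟨0, hpos⟩ (Nat.zero_le _) (Nat.zero_le _)
    rw [heq]
    exact rule_zprof hR hDI hUI hB n 0 (by omega) t (he ⟨0, hpos⟩) l
  | succ j ih =>
    intro e he hc
    by_cases hjn : j + 1 < n
    · have hjn' : j < n := by omega
      set J : Fin n := ⟨j, hjn'⟩ with hJ
      set J1 : Fin n := ⟨j+1, hjn⟩ with hJ1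
      set t := e J1 with htdef
      have ht : 0 ≤ t := he J1
      set g : Fin n → ℝ := Function.update e J t with hgdef
      have hg : Nonneg n g := fun l => by
        rcases eq_or_ne l J with h | h
        · rw [hgdef, h, Function.update_self]; exact ht
        · rw [hgdef, Function.update_of_ne h]; exact he l
      have hgval : ∀ l : Fin n, j ≤ (l:ℕ) → g l = t := by
        intro l hl
        rcases eq_or_ne l J with h | h
        · rw [hgdef, h, Function.update_self]
        · have hl1 : j + 1 ≤ (l:ℕ) := by
            rcases Nat.lt_or_ge (l:ℕ) (j+1) with h' | h'
            · exact absurd (Fin.ext (show (l:ℕ) = j by omega)) h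
            · exact h'
          rw [hgdef, Function.update_of_ne h]
          exact hc l J1 (by omega) (by simp [hJ1])
      have hgc : ∀ l m : Fin n, j ≤ (l:ℕ) → j ≤ (m:ℕ) → g l = g m := by
        intro l m hl hm
        rw [hgval l hl, hgval m hm]
      have hgSh : ∀ l, R g l = Sh n g l := ih g hg hgc
      have hoff : ∀ l, l ≠ J → e l = g l := fun l hl => by
        rw [hgdef, Function.update_of_ne hl]
      have hconst : ∀ k l, J < k → J < l → e k = e l := by
        intro k l hk hl
        have hk' : j < (k:ℕ) := hk
        have hl' : j < (l:ℕ) := hl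
        exact hc k l (by omega) (by omega)
      have hej : R e J = Sh n e J := by
        set eb : Fin n → ℝ := fun l : Fin n => if (l:ℕ) ≤ j then e l else e J with hebdef
        have heb : Nonneg n eb := fun l => by
          simp only [hebdef]; split
          · exact he l
          · exact he J
        have hagree : ∀ l, l ≤ J → e l = eb l := by
          intro l hl
          have hl' : (l:ℕ) ≤ j := hl
          simp only [hebdef]
          rw [if_pos hl']
        have hebc : ∀ l m : Fin n, j ≤ (l:ℕ) → j ≤ (m:ℕ) → eb l = eb m := by
          have hv : ∀ l : Fin n, j ≤ (l:ℕ) → eb l = e J := by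
            intro l hl
            simp only [hebdef]
            by_cases h : (l:ℕ) ≤ j
            · rw [if_pos h]
              congr 1
              exact Fin.ext (show (l:ℕ) = j by omega)
            · rw [if_neg h]
          intro l m hl hm
          rw [hv l hl, hv m hm]
        calc R e J = R eb J := upstream_dep hUI he heb J hagree
          _ = Sh n eb J := ih eb heb hebc J
          _ = Sh n e J := sh_congr (fun l hl => (hagree l hl).symm)
      exact step_lemma hR hDI hUI he hg J hoff hconst hgSh hej
    · refine ih e he ?_
      intro l m hl hm
      have hlm : l = m := Fin.ext (by have h1 := l.isLt; have h2 := m.isLt; omega)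
      rw [hlm]

end ShapleyAux5
/-- Theorem 1 in the paper: scale invariance, downstream impartiality,
upstream invariance and balance characterize the Shapley rule. -/
theorem shapley_characterization (n : ℕ) (hn : 0 < n)
    (R : (Fin n → ℝ) → (Fin n → ℝ)) (hR : IsRule n R) :
    (ScaleInvariant n R ∧ DownstreamImpartial n R ∧ UpstreamInvariant n R ∧ IsBalanced n R) ↔
    (∀ e : Fin n → ℝ, Nonneg n e → ∀ i, R e i = Sh n e i) := by
  constructor
  · rintro ⟨hSc, hDI, hUI, hB⟩ e he i
    exact rule_q hR hDI hUI hB n e he (fun l m hl hm => absurd l.isLt (not_lt.2 hl)) i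
  · intro hSh
    refine ⟨?_, ?_, ?_, ?_⟩
    · -- scale invariance
      intro e he γ hγ i
      have he' : Nonneg n (fun j => γ * e j) := fun j => mul_nonneg hγ (he j)
      rw [hSh _ he' i, hSh e he i, Sh, Sh, Finset.mul_sum]
      exact Finset.sum_congr rfl (fun m _ => by rw [mul_div_assoc])
    · -- downstream impartiality
      intro e e' he he' i hlt hoff hcst k l hk hl
      rw [hSh e he, hSh e' he', hSh e he, hSh e' he',
        sh_diff hoff hk.le, sh_diff hoff hl.le]
    · -- upstream invariance
      intro e e' he he' i hlt hoff k hk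
      rw [hSh e he, hSh e' he']
      exact sh_congr (fun m hm => hoff m (ne_of_lt (lt_of_le_of_lt hm hk)))
    · -- balance
      intro e he i hi hpos hoff
      have hsing : ∀ k : Fin n, i ≤ k → Sh n e k = e i / ((n:ℝ) - (i:ℕ)) := by
        intro k hk
        rw [Sh, Finset.sum_eq_single_of_mem i (Finset.mem_Iic.2 hk)]
        intro b _ hb
        rw [hoff b hb]; simp
      rw [hSh e he i, hsing i le_rfl]
      rw [Finset.sum_congr rfl (fun k hk => (hSh e he k).trans
        (hsing k (le_of_lt (Finset.mem_Ioi.1 hk)))), Finset.sum_const, nsmul_eq_mul,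
        card_Ioi_cast i]
      have hne : (n:ℝ) - 1 - (i:ℕ) ≠ 0 := by
        have h2 : ((i:ℕ):ℝ) + 2 ≤ (n:ℝ) := by exact_mod_cast (by omega : (i:ℕ) + 2 ≤ n)
        linarith
      rw [one_div, ← mul_assoc, inv_mul_cancel₀ hne, one_mul]
end

section
/- A rule R satisfies scale invariance, downstream impartiality, upstream invariance, and equal treatment of equal source inflows if and only if there is λ ∈ [0,1] with R(e) = λ R^NT(e) + (1-λ) R^EFT(e) for all e, where R^NT(e) = e is the no-transfer rule and R^EFT is the egalitarian full-transfer rule. -/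
open Finset

namespace CompAux

variable {n : ℕ}

noncomputable def Phi (n : ℕ) (l : ℝ) (e : Fin n → ℝ) (i : Fin n) : ℝ :=
  l * NT n e i + (1 - l) * EFT n e i

lemma sum_split (m : Fin n) (f : Fin n → ℝ) :
    ∑ i, f i = (∑ i ∈ Iio m, f i) + f m + ∑ i ∈ Ioi m, f i := by
  have h2 : Iic m ∪ Ioi m = (univ : Finset (Fin n)) := by
    ext i; simp [le_or_gt]
  have hd : Disjoint (Iic m) (Ioi m) := by
    simp [Finset.disjoint_left]
  rw [← h2, Finset.sum_union hd, ← Finset.Iio_insert m, Finset.sum_insert (by simp)]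
  ring

lemma Phi_congr {l : ℝ} {e e' : Fin n → ℝ} {k : Fin n}
    (h : ∀ j : Fin n, j ≤ k → e j = e' j) : Phi n l e k = Phi n l e' k := by
  unfold Phi NT EFT
  have hs : (∑ j ∈ Iio k, e j / ((n : ℝ) - 1 - (j : ℕ)))
      = ∑ j ∈ Iio k, e' j / ((n : ℝ) - 1 - (j : ℕ)) :=
    Finset.sum_congr rfl fun j hj => by rw [h j (le_of_lt (Finset.mem_Iio.1 hj))]
  rw [h k le_rfl, hs]

lemma Phi_diff {l : ℝ} {e e' : Fin n → ℝ} {i : Fin n}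
    (hoff : ∀ j, j ≠ i → e j = e' j) {k : Fin n} (hik : i < k) :
    Phi n l e' k - Phi n l e k = (1 - l) * ((e' i - e i) / ((n : ℝ) - 1 - (i : ℕ))) := by
  have hk : e k = e' k := hoff k (by intro h; subst h; exact lt_irrefl _ hik)
  unfold Phi NT EFT
  rw [hk]
  have hsum : (∑ j ∈ Iio k, e' j / ((n : ℝ) - 1 - (j : ℕ)))
      - (∑ j ∈ Iio k, e j / ((n : ℝ) - 1 - (j : ℕ)))
      = (e' i - e i) / ((n : ℝ) - 1 - (i : ℕ)) := by
    rw [← Finset.sum_sub_distrib]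
    rw [Finset.sum_eq_single i]
    · ring
    · intro j hj hji; rw [hoff j hji]; ring
    · intro h; exact absurd (Finset.mem_Iio.2 hik) h
  linear_combination (1 - l) * hsum

variable {R : (Fin n → ℝ) → (Fin n → ℝ)}

lemma prefix_zero (hR : IsRule n R) {e : Fin n → ℝ} (he : Nonneg n e) {k : Fin n}
    (h0 : ∑ i ∈ Iic k, e i = 0) : ∀ i, i ≤ k → R e i = 0 := by
  intro i hi
  have h1 : ∑ j ∈ Iic k, R e j ≤ 0 := le_of_le_of_eq ((hR e he).2.1 k) h0
  have h2 : ∀ j ∈ Iic k, 0 ≤ R e j := fun j _ => (hR e he).1 j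
  have h3 : ∑ j ∈ Iic k, R e j = 0 :=
    le_antisymm h1 (Finset.sum_nonneg h2)
  exact (Finset.sum_eq_zero_iff_of_nonneg h2).1 h3 i (Finset.mem_Iic.2 hi)

lemma R_zero (hR : IsRule n R) (k : Fin n) : R (fun _ => (0:ℝ)) k = 0 := by
  have he : Nonneg n (fun _ => (0:ℝ)) := fun _ => le_rfl
  have := prefix_zero hR he (k := ⟨n-1, by have := k.is_lt; omega⟩) (by simp)
  exact this k (by have hk := k.is_lt; simp [Fin.le_def]; omega)

lemma agree_low (hR : IsRule n R) (hUI : UpstreamInvariant n R)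
    {e e' : Fin n → ℝ} (he : Nonneg n e) (he' : Nonneg n e') (m : ℕ)
    (hag : ∀ j : Fin n, (j:ℕ) ≤ m → e j = e' j) :
    ∀ k : Fin n, (k:ℕ) ≤ m → R e k = R e' k := by
  intro k hk
  set hyb : ℕ → (Fin n → ℝ) := fun t j => if (j:ℕ) < t then e' j else e j with hhyb
  have hybnn : ∀ t, Nonneg n (hyb t) := by
    intro t j; simp only [hhyb]; split <;> [exact he' j; exact he j]
  have key : ∀ s : ℕ, R (hyb (m+1+s)) k = R (hyb (m+1)) k := by
    intro s
    induction s with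
    | zero => rfl
    | succ s ih =>
      rw [← ih, show m+1+(s+1) = m+1+s+1 by omega]
      by_cases ht : m + 1 + s < n
      · set i : Fin n := ⟨m+1+s, ht⟩ with hi
        have hoff : ∀ j : Fin n, j ≠ i → hyb (m+1+s) j = hyb (m+1+s+1) j := by
          intro j hj
          have : (j:ℕ) ≠ m+1+s := fun h => hj (Fin.ext h)
          simp only [hhyb]
          by_cases h2 : (j:ℕ) < m+1+s
          · rw [if_pos h2, if_pos (by omega)]
          · rw [if_neg h2, if_neg (by omega)]
        have hvt : hyb (m+1+s) i = e i := by simp [hhyb, hi]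
        have hvt1 : hyb (m+1+s+1) i = e' i := by simp [hhyb, hi]
        have hki : k < i := by rw [Fin.lt_def]; simp only [hi]; omega
        rcases lt_trichotomy (e i) (e' i) with hlt | heq | hgt
        · exact (hUI _ _ (hybnn _) (hybnn _) i (by rw [hvt, hvt1]; exact hlt) hoff k hki).symm
        · have : hyb (m+1+s) = hyb (m+1+s+1) := by
            funext j
            by_cases hj : j = i
            · rw [hj, hvt, hvt1, heq]
            · exact hoff j hj
          rw [this]
        · exact hUI _ _ (hybnn _) (hybnn _) i (by rw [hvt, hvt1]; exact hgt)
            (fun j hj => (hoff j hj).symm) k hki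
      · have : hyb (m+1+s) = hyb (m+1+s+1) := by
          funext j
          simp only [hhyb]
          rw [if_pos (by omega), if_pos (by omega)]
        rw [this]
  have h1 : hyb (m+1) = e := by
    funext j
    simp only [hhyb]
    by_cases hj : (j:ℕ) < m+1
    · rw [if_pos hj, hag j (by omega)]
    · rw [if_neg hj]
  have h2 : hyb (m+1+n) = e' := by
    funext j
    simp only [hhyb]
    rw [if_pos (by omega)]
  calc R e k = R (hyb (m+1)) k := by rw [h1]
    _ = R (hyb (m+1+n)) k := (key n).symm
    _ = R e' k := by rw [h2]

lemma step (hR : IsRule n R) (hUI : UpstreamInvariant n R) (hDI : DownstreamImpartial n R)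
    (l : ℝ) {V W : Fin n → ℝ} (hV : Nonneg n V) (hW : Nonneg n W)
    {mF : Fin n} (hm : (mF:ℕ) < n - 1)
    (hoff : ∀ j, j ≠ mF → V j = W j)
    (htV : ∀ a b : Fin n, mF < a → mF < b → V a = V b)
    (htW : ∀ a b : Fin n, mF < a → mF < b → W a = W b)
    (hVm : R V mF = Phi n l V mF) (hWm : R W mF = Phi n l W mF) :
    ∀ k, mF < k → R W k - R V k = Phi n l W k - Phi n l V k := by
  intro k hk
  by_cases hc : V mF = W mF
  · have hVW : V = W := funext fun j => by
      by_cases hj : j = mF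
      · rw [hj, hc]
      · exact hoff j hj
    rw [hVW]; ring
  · have hnn : 2 ≤ n := by omega
    set lastF : Fin n := ⟨n-1, by omega⟩ with hlast
    have hml : mF < lastF := by rw [Fin.lt_def]; simpa [hlast] using hm
    have hd : ∀ k', mF < k' → R W k' - R V k' = R W lastF - R V lastF := by
      intro k' hk'
      rcases lt_or_gt_of_ne hc with hlt | hgt
      · exact hDI V W hV hW mF hlt (fun j hj => hoff j hj) htV k' lastF hk' hml
      · have h1 := hDI W V hW hV mF hgt (fun j hj => (hoff j hj).symm) htW k' lastF hk' hml
        linarith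
    have hlow : ∀ k', k' < mF → R V k' = R W k' := by
      intro k' hk'
      rcases lt_or_gt_of_ne hc with hlt | hgt
      · exact hUI V W hV hW mF hlt (fun j hj => hoff j hj) k' hk'
      · exact (hUI W V hW hV mF hgt (fun j hj => (hoff j hj).symm) k' hk').symm
    have htot : ∑ i, R W i - ∑ i, R V i = W mF - V mF := by
      rw [(hR W hW).2.2, (hR V hV).2.2, sum_split mF W, sum_split mF V]
      have h1 : ∑ i ∈ Iio mF, W i = ∑ i ∈ Iio mF, V i :=
        sum_congr rfl fun j hj => (hoff j (ne_of_lt (mem_Iio.1 hj))).symm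
      have h2 : ∑ i ∈ Ioi mF, W i = ∑ i ∈ Ioi mF, V i :=
        sum_congr rfl fun j hj => (hoff j (ne_of_gt (mem_Ioi.1 hj))).symm
      rw [h1, h2]; ring
    have hmid : R W mF - R V mF = l * (W mF - V mF) := by
      rw [hWm, hVm]
      unfold Phi NT EFT
      have h1 : ∑ j ∈ Iio mF, W j / ((n:ℝ)-1-(j:ℕ)) = ∑ j ∈ Iio mF, V j / ((n:ℝ)-1-(j:ℕ)) :=
        sum_congr rfl fun j hj => by rw [hoff j (ne_of_lt (mem_Iio.1 hj))]
      rw [h1, if_neg (show ¬ ((mF:ℕ) = n - 1) by omega),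
        if_neg (show ¬ ((mF:ℕ) = n - 1) by omega)]
      ring
    have hIoi : ∑ i ∈ Ioi mF, R W i - ∑ i ∈ Ioi mF, R V i
        = ((n - 1 - (mF:ℕ) : ℕ) : ℝ) * (R W lastF - R V lastF) := by
      rw [← Finset.sum_sub_distrib,
        Finset.sum_congr rfl (fun j hj => hd j (mem_Ioi.1 hj)),
        Finset.sum_const, Fin.card_Ioi, nsmul_eq_mul]
    have hIio : ∑ i ∈ Iio mF, R W i = ∑ i ∈ Iio mF, R V i :=
      sum_congr rfl fun j hj => (hlow j (mem_Iio.1 hj)).symm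
    have hcard : ((n - 1 - (mF:ℕ) : ℕ) : ℝ) = (n:ℝ) - 1 - (mF:ℕ) := by
      rw [Nat.cast_sub (by omega), Nat.cast_sub (by omega)]
      push_cast; ring
    have hpos : (0:ℝ) < (n:ℝ) - 1 - (mF:ℕ) := by
      have h2 : ((mF:ℕ) + 2 : ℕ) ≤ n := by omega
      have h3 := (Nat.cast_le (α := ℝ)).2 h2
      push_cast at h3; linarith
    have hkey : ((n:ℝ) - 1 - (mF:ℕ)) * (R W lastF - R V lastF) = (1 - l) * (W mF - V mF) := by
      have e1 := sum_split mF (R W)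
      have e2 := sum_split mF (R V)
      rw [← hcard]
      linarith [hIoi, htot, hmid, hIio, e1, e2]
    have hdval : R W lastF - R V lastF
        = (1 - l) * ((W mF - V mF) / ((n:ℝ)-1-(mF:ℕ))) := by
      have hne : ((n:ℝ) - 1 - (mF:ℕ)) ≠ 0 := ne_of_gt hpos
      field_simp
      linarith [hkey]
    rw [hd k hk, hdval, Phi_diff (l := l) hoff hk]

lemma Phi_zero (l : ℝ) (k : Fin n) : Phi n l (fun _ => (0:ℝ)) k = 0 := by
  simp [Phi, NT, EFT]

lemma Phi_eq_zero {l : ℝ} {e : Fin n → ℝ} {k : Fin n}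
    (h : ∀ i : Fin n, i ≤ k → e i = 0) : Phi n l e k = 0 := by
  unfold Phi NT EFT
  rw [h k le_rfl,
    Finset.sum_eq_zero (fun i hi => by rw [h i (le_of_lt (mem_Iio.1 hi))]; simp)]
  simp

def Zf (n j : ℕ) (c : ℝ) : Fin n → ℝ := fun i => if j ≤ (i:ℕ) then c else 0

lemma Zf_nonneg {j : ℕ} {c : ℝ} (hc : 0 ≤ c) : Nonneg n (Zf n j c) := fun i => by
  unfold Zf; split
  · exact hc
  · exact le_rfl

lemma Zlem (hn : 2 ≤ n) (hR : IsRule n R) (hUI : UpstreamInvariant n R)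
    (hDI : DownstreamImpartial n R) (l : ℝ)
    (hsrc : ∀ e, Nonneg n e → ∀ s : Fin n, (s:ℕ) < n - 1 → 0 < e s →
      (∀ j, j < s → e j = 0) → R e s = l * e s) :
    ∀ t j : ℕ, n ≤ j + t → ∀ c : ℝ, 0 ≤ c → ∀ k, R (Zf n j c) k = Phi n l (Zf n j c) k := by
  intro t
  induction t with
  | zero =>
    intro j hj c hc k
    have hz : Zf n j c = fun _ => (0:ℝ) := funext fun i => by
      unfold Zf; rw [if_neg (by have := i.is_lt; omega)]
    rw [hz, R_zero hR, Phi_zero]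
  | succ t ih =>
    intro j hj c hc k
    by_cases hjt : n ≤ j + t
    · exact ih j hjt c hc k
    by_cases hc0 : c = 0
    · subst hc0
      have hz : Zf n j (0:ℝ) = fun _ => (0:ℝ) := funext fun i => by
        unfold Zf; split <;> rfl
      rw [hz, R_zero hR, Phi_zero]
    have hcpos : 0 < c := lt_of_le_of_ne hc (Ne.symm hc0)
    have hZnn : Nonneg n (Zf n j c) := Zf_nonneg hc
    by_cases hjn : n - 1 ≤ j
    · -- j = n - 1 : only the last agent has inflow
      have hjn' : j = n - 1 := by omega
      subst hjn'
      rcases lt_or_ge ((k:ℕ)) (n-1) with hk | hk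
      · have h0 : ∑ i ∈ Iic k, Zf n (n-1) c i = 0 :=
          Finset.sum_eq_zero fun i hi => by
            unfold Zf
            rw [if_neg (by have := Fin.le_def.1 (mem_Iic.1 hi); omega)]
        rw [prefix_zero hR hZnn h0 k le_rfl,
          Phi_eq_zero (fun i hi => by
            unfold Zf
            rw [if_neg (by have := Fin.le_def.1 hi; omega)])]
      · -- k is the last agent
        have hk' : (k:ℕ) = n - 1 := by have := k.is_lt; omega
        have hIio0 : ∀ i : Fin n, i < k → R (Zf n (n-1) c) i = 0 := by
          intro i hik
          have hi' : (i:ℕ) < n - 1 := by have := Fin.lt_def.1 hik; omega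
          have h0 : ∑ i' ∈ Iic i, Zf n (n-1) c i' = 0 :=
            Finset.sum_eq_zero fun i' hi'2 => by
              unfold Zf
              rw [if_neg (by have := Fin.le_def.1 (mem_Iic.1 hi'2); omega)]
          exact prefix_zero hR hZnn h0 i le_rfl
        have hIoiE : Ioi k = (∅ : Finset (Fin n)) :=
          Finset.eq_empty_of_forall_notMem fun i hi => by
            have := Fin.lt_def.1 (mem_Ioi.1 hi); have := i.is_lt; omega
        have htotZ : ∑ i, Zf n (n-1) c i = c := by
          rw [Finset.sum_congr rfl (fun i _ => show Zf n (n-1) c i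
              = if i = k then c else 0 by
            unfold Zf
            by_cases h : i = k
            · rw [if_pos h, if_pos (by rw [h, hk'])]
            · rw [if_neg h, if_neg (by
                have hik : (i:ℕ) ≠ n - 1 := fun hh => h (Fin.ext (by omega))
                omega)])]
          simp
        have hRk : R (Zf n (n-1) c) k = c := by
          have e1 := sum_split k (R (Zf n (n-1) c))
          rw [(hR _ hZnn).2.2, htotZ, hIoiE, Finset.sum_empty,
            Finset.sum_eq_zero (fun i hi => hIio0 i (mem_Iio.1 hi))] at e1
          linarith
        rw [hRk]
        unfold Phi NT EFT
        rw [Finset.sum_eq_zero (fun i hi => by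
          unfold Zf
          rw [if_neg (by have := Fin.lt_def.1 (mem_Iio.1 hi); omega)]
          simp),
          if_pos hk']
        unfold Zf
        rw [if_pos (by omega)]
        ring
    · -- j < n - 1 : inductive DI step
      have hjlt : j < n - 1 := by omega
      set jF : Fin n := ⟨j, by omega⟩ with hjF
      set V : Fin n → ℝ := Zf n (j+1) c with hV
      set W : Fin n → ℝ := Zf n j c with hW
      have hVnn : Nonneg n V := Zf_nonneg hc
      have hIH : ∀ k', R V k' = Phi n l V k' := ih (j+1) (by omega) c hc
      have hoff : ∀ i : Fin n, i ≠ jF → V i = W i := by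
        intro i hi
        have hij : (i:ℕ) ≠ j := fun hh => hi (Fin.ext hh)
        unfold V W; unfold Zf
        by_cases h : j ≤ (i:ℕ)
        · rw [if_pos (by omega), if_pos h]
        · rw [if_neg (by omega), if_neg h]
      have htV : ∀ a b : Fin n, jF < a → jF < b → V a = V b := by
        intro a b ha hb
        have ha' : j < (a:ℕ) := by simpa [Fin.lt_def, hjF] using ha
        have hb' : j < (b:ℕ) := by simpa [Fin.lt_def, hjF] using hb
        unfold V; unfold Zf
        rw [if_pos (by omega), if_pos (by omega)]
      have htW : ∀ a b : Fin n, jF < a → jF < b → W a = W b := by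
        intro a b ha hb
        have ha' : j < (a:ℕ) := by simpa [Fin.lt_def, hjF] using ha
        have hb' : j < (b:ℕ) := by simpa [Fin.lt_def, hjF] using hb
        unfold W; unfold Zf
        rw [if_pos (by omega), if_pos (by omega)]
      have hWjF : W jF = c := by unfold W; unfold Zf; rw [if_pos (by simp [hjF])]
      have hWm : R W jF = Phi n l W jF := by
        have h1 : R W jF = l * c := by
          have := hsrc W (Zf_nonneg hc) jF (by simp [hjF]; omega)
            (by rw [hWjF]; exact hcpos)
            (fun i hi => by
              unfold W; unfold Zf
              rw [if_neg (by have := Fin.lt_def.1 hi; simp [hjF] at this ⊢; omega)])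
          rw [this, hWjF]
        rw [h1]
        unfold Phi NT EFT
        rw [hWjF, Finset.sum_eq_zero (fun i hi => by
            unfold W; unfold Zf
            rw [if_neg (by have := Fin.lt_def.1 (mem_Iio.1 hi); simp [hjF] at this; omega)]
            simp),
          if_neg (by simp [hjF]; omega)]
        ring
      have hstep := step hR hUI hDI l hVnn (Zf_nonneg hc) (by simp [hjF]; omega)
        hoff htV htW (hIH jF) hWm
      rcases lt_trichotomy ((k:ℕ)) j with hkj | hkj | hkj
      · have h0 : ∑ i ∈ Iic k, W i = 0 :=
          Finset.sum_eq_zero fun i hi => by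
            unfold W; unfold Zf
            rw [if_neg (by have := Fin.le_def.1 (mem_Iic.1 hi); omega)]
        rw [prefix_zero hR (Zf_nonneg hc) h0 k le_rfl,
          Phi_eq_zero (fun i hi => by
            unfold W; unfold Zf
            rw [if_neg (by have := Fin.le_def.1 hi; omega)])]
      · have : k = jF := Fin.ext (by simp [hjF, hkj])
        rw [this]; exact hWm
      · have hjk : jF < k := by rw [Fin.lt_def]; simp [hjF]; omega
        have := hstep k hjk
        rw [hIH k] at this
        linarith

def Tf (n m : ℕ) (c : ℝ) (e : Fin n → ℝ) : Fin n → ℝ := fun i => if (i:ℕ) < m then e i else c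

lemma Emain (hn : 2 ≤ n) (hR : IsRule n R) (hUI : UpstreamInvariant n R)
    (hDI : DownstreamImpartial n R) (l : ℝ)
    (hsrc : ∀ e, Nonneg n e → ∀ s : Fin n, (s:ℕ) < n - 1 → 0 < e s →
      (∀ j, j < s → e j = 0) → R e s = l * e s)
    (e : Fin n → ℝ) (he : Nonneg n e) :
    ∀ m : ℕ, m ≤ n - 1 → ∀ c : ℝ, 0 ≤ c → ∀ k : Fin n, m ≤ (k:ℕ) →
      R (Tf n m c e) k = Phi n l (Tf n m c e) k := by
  intro m
  induction m with
  | zero =>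
    intro _ c hc k _
    have hz : Tf n 0 c e = Zf n 0 c := funext fun i => by unfold Tf Zf; simp
    rw [hz]
    exact Zlem hn hR hUI hDI l hsrc n 0 (by omega) c hc k
  | succ m ih =>
    intro hm c hc k hk
    have hmlt : m < n - 1 := by omega
    set mF : Fin n := ⟨m, by omega⟩ with hmF
    set W := Tf n (m+1) c e with hWdef
    set V := Tf n m c e with hVdef
    have hWnn : Nonneg n W := fun i => by
      unfold W; unfold Tf; split
      · exact he i
      · exact hc
    have hVnn : Nonneg n V := fun i => by
      unfold V; unfold Tf; split
      · exact he i
      · exact hc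
    have hoff : ∀ i : Fin n, i ≠ mF → V i = W i := by
      intro i hi
      have him : (i:ℕ) ≠ m := fun hh => hi (Fin.ext hh)
      unfold V W; unfold Tf
      by_cases h : (i:ℕ) < m
      · rw [if_pos h, if_pos (by omega)]
      · rw [if_neg h, if_neg (by omega)]
    have hVm : R V mF = Phi n l V mF := ih (by omega) c hc mF (by simp [hmF])
    have hc2 : 0 ≤ e mF := he mF
    set V2 := Tf n m (e mF) e with hV2def
    have hV2nn : Nonneg n V2 := fun i => by
      unfold V2; unfold Tf; split
      · exact he i
      · exact hc2
    have hag : ∀ j : Fin n, (j:ℕ) ≤ m → W j = V2 j := by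
      intro j hj
      unfold W V2; unfold Tf
      by_cases h : (j:ℕ) < m
      · rw [if_pos (by omega), if_pos h]
      · have hjm : (j:ℕ) = m := by omega
        rw [if_pos (by omega), if_neg (by omega)]
        congr 1
        exact Fin.ext (by simp [hmF, hjm])
    have hWm : R W mF = Phi n l W mF := by
      have h1 : R W mF = R V2 mF :=
        agree_low hR hUI hWnn hV2nn m hag mF (by simp [hmF])
      have h2 : R V2 mF = Phi n l V2 mF := ih (by omega) (e mF) hc2 mF (by simp [hmF])
      have h3 : Phi n l V2 mF = Phi n l W mF :=
        Phi_congr (fun j hj => (hag j (by simpa [Fin.le_def, hmF] using hj)).symm)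
      rw [h1, h2, h3]
    have htV : ∀ a b : Fin n, mF < a → mF < b → V a = V b := by
      intro a b ha hb
      have ha' : m < (a:ℕ) := by simpa [Fin.lt_def, hmF] using ha
      have hb' : m < (b:ℕ) := by simpa [Fin.lt_def, hmF] using hb
      unfold V; unfold Tf
      rw [if_neg (by omega), if_neg (by omega)]
    have htW : ∀ a b : Fin n, mF < a → mF < b → W a = W b := by
      intro a b ha hb
      have ha' : m < (a:ℕ) := by simpa [Fin.lt_def, hmF] using ha
      have hb' : m < (b:ℕ) := by simpa [Fin.lt_def, hmF] using hb
      unfold W; unfold Tf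
      rw [if_neg (by omega), if_neg (by omega)]
    have hstep := step hR hUI hDI l hVnn hWnn (by simp [hmF]; omega) hoff htV htW hVm hWm
    have hkm : mF < k := by rw [Fin.lt_def]; simp [hmF]; omega
    have h4 := hstep k hkm
    have hVk : R V k = Phi n l V k := ih (by omega) c hc k (by omega)
    linarith

lemma forward_formula (hn : 2 ≤ n) (hR : IsRule n R) (hUI : UpstreamInvariant n R)
    (hDI : DownstreamImpartial n R) (l : ℝ)
    (hsrc : ∀ e, Nonneg n e → ∀ s : Fin n, (s:ℕ) < n - 1 → 0 < e s →
      (∀ j, j < s → e j = 0) → R e s = l * e s)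
    (e : Fin n → ℝ) (he : Nonneg n e) (k : Fin n) : R e k = Phi n l e k := by
  have hm : (k:ℕ) ≤ n - 1 := by have := k.is_lt; omega
  set V := Tf n (k:ℕ) (e k) e with hVdef
  have hVnn : Nonneg n V := fun i => by
    unfold V; unfold Tf; split
    · exact he i
    · exact he k
  have hag : ∀ j : Fin n, (j:ℕ) ≤ (k:ℕ) → e j = V j := by
    intro j hj
    unfold V; unfold Tf
    by_cases h : (j:ℕ) < (k:ℕ)
    · rw [if_pos h]
    · have : (j:ℕ) = (k:ℕ) := by omega
      rw [if_neg h]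
      congr 1
      exact Fin.ext this
  calc R e k = R V k := agree_low hR hUI he hVnn (k:ℕ) hag k le_rfl
    _ = Phi n l V k := Emain hn hR hUI hDI l hsrc e he (k:ℕ) hm (e k) (he k) k le_rfl
    _ = Phi n l e k := Phi_congr (fun j hj => (hag j (Fin.le_def.1 hj)).symm)

end CompAux


/-- Theorem 2 in the paper: scale invariance, downstream impartiality,
upstream invariance and equal treatment of equal source inflows characterize the
compromise rules `λ R^NT + (1-λ) R^EFT`. -/
theorem compromise_characterization (n : ℕ) (hn : 2 ≤ n)
    (R : (Fin n → ℝ) → (Fin n → ℝ)) (hR : IsRule n R) :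
    (ScaleInvariant n R ∧ DownstreamImpartial n R ∧ UpstreamInvariant n R ∧
      EqualTreatmentOfEqualSourceInflows n R) ↔
    (∃ l : ℝ, 0 ≤ l ∧ l ≤ 1 ∧
      ∀ e : Fin n → ℝ, Nonneg n e → ∀ i, R e i = l * NT n e i + (1 - l) * EFT n e i) := by
  constructor
  · rintro ⟨hSc, hDI, hUI, hET⟩
    set z : Fin n := ⟨0, by omega⟩ with hz
    set d0 : Fin n → ℝ := fun j => if j = z then 1 else 0 with hd0
    have hd0nn : Nonneg n d0 := fun i => by
      by_cases h : i = z <;> simp [hd0, h]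
    set l : ℝ := R d0 z with hl
    have hl0 : 0 ≤ l := (hR d0 hd0nn).1 z
    have hl1 : l ≤ 1 := by
      have h1 := (hR d0 hd0nn).2.1 z
      have hIic : Iic z = {z} := by
        ext i
        simp only [Finset.mem_Iic, Finset.mem_singleton, Fin.le_def, Fin.ext_iff, hz]
        omega
      rw [hIic, Finset.sum_singleton, Finset.sum_singleton] at h1
      simpa [hd0] using h1
    have hsrc : ∀ e, Nonneg n e → ∀ s : Fin n, (s:ℕ) < n - 1 → 0 < e s →
        (∀ j, j < s → e j = 0) → R e s = l * e s := by
      intro e he s hs hpos hlow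
      have hcne : e s ≠ 0 := ne_of_gt hpos
      set e2 : Fin n → ℝ := fun j => (e s)⁻¹ * e j with he2
      have he2nn : Nonneg n e2 := fun i =>
        mul_nonneg (inv_nonneg.2 hpos.le) (he i)
      have hee : (fun j => (e s) * e2 j) = e := funext fun j => by
        unfold e2; field_simp
      have he2s : e2 s = 1 := by unfold e2; field_simp
      have h1 : R e s = (e s) * R e2 s := by
        conv_lhs => rw [← hee]
        exact hSc e2 he2nn (e s) hpos.le s
      have h2 : R e2 s = l := by
        have hzlt : (z:ℕ) < n - 1 := by simp [hz]; omega
        have := hET e2 d0 he2nn hd0nn s z hs hzlt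
          (by rw [he2s]; norm_num)
          (by simp [hd0])
          (fun j hj => by simp [he2, hlow j hj])
          (fun j hj => absurd (Fin.lt_def.1 hj) (by simp [hz]))
          (by rw [he2s]; simp [hd0])
        rw [this, hl]
      rw [h1, h2]; ring
    refine ⟨l, hl0, hl1, ?_⟩
    intro e he i
    have := CompAux.forward_formula hn hR hUI hDI l hsrc e he i
    simpa [CompAux.Phi] using this
  · rintro ⟨l, hl0, hl1, hform⟩
    refine ⟨?_, ?_, ?_, ?_⟩
    · -- ScaleInvariant
      intro e he γ hγ i
      have hge : Nonneg n (fun j => γ * e j) := fun j => mul_nonneg hγ (he j)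
      rw [hform _ hge i, hform e he i]
      simp only [NT, EFT]
      have hs : (∑ j ∈ Iio i, (γ * e j) / ((n:ℝ)-1-(j:ℕ)))
          = γ * ∑ j ∈ Iio i, e j / ((n:ℝ)-1-(j:ℕ)) := by
        rw [Finset.mul_sum]
        exact Finset.sum_congr rfl fun j _ => by ring
      rw [hs]
      split_ifs <;> ring
    · -- DownstreamImpartial
      intro e e' he he' i hlt hoff htail k k' hk hk'
      have d1 := CompAux.Phi_diff (l := l) hoff hk
      have d2 := CompAux.Phi_diff (l := l) hoff hk'
      rw [hform e' he' k, hform e he k, hform e' he' k', hform e he k']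
      unfold CompAux.Phi at d1 d2
      linarith
    · -- UpstreamInvariant
      intro e e' he he' i hlt hoff k hki
      rw [hform e he k, hform e' he' k]
      have := CompAux.Phi_congr (n := n) (l := l) (k := k)
        (e := e) (e' := e') (fun j hj => hoff j (lt_of_le_of_lt hj hki).ne)
      unfold CompAux.Phi at this
      exact this
    · -- Equal treatment of equal source inflows
      intro e e' he he' s s' hs hs' hpos hpos' hlow hlow' heq
      rw [hform e he s, hform e' he' s']
      have h1 : EFT n e s = 0 := by
        unfold EFT
        rw [Finset.sum_eq_zero (fun j hj => by
            rw [hlow j (Finset.mem_Iio.1 hj)]; simp),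
          if_neg (by omega)]
        simp
      have h2 : EFT n e' s' = 0 := by
        unfold EFT
        rw [Finset.sum_eq_zero (fun j hj => by
            rw [hlow' j (Finset.mem_Iio.1 hj)]; simp),
          if_neg (by omega)]
        simp
      rw [h1, h2]
      simp only [NT]
      rw [heq]
end

section
/- A rule R satisfies scale invariance, downstream impartiality, upstream invariance, and equal treatment of equal upstream total inflow if and only if there is δ ∈ [0,1] with R(e) = δ R^NT(e) + (1-δ) R^EPT(e) for all e, where R^NT(e) = e and R^EPT_i(e) = [1 − (n−i)/(n−1)] e_i + (1/(n−1)) Σ_{k<i} e_k. -/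
open Finset

lemma aux_zero_alloc {n : ℕ} (R : (Fin n → ℝ) → (Fin n → ℝ)) (hR : IsRule n R) (i : Fin n) :
    R (fun _ => 0) i = 0 := by
  obtain ⟨h1, _, h3⟩ := hR (fun _ => 0) (fun _ => le_refl 0)
  have hsum : ∑ j, R (fun _ => 0) j = 0 := by simpa using h3
  exact (Finset.sum_eq_zero_iff_of_nonneg (fun j _ => h1 j)).mp hsum i (Finset.mem_univ i)

lemma aux_point {n : ℕ} (hn : 2 ≤ n) (R : (Fin n → ℝ) → (Fin n → ℝ)) (hR : IsRule n R)
    (hSI : ScaleInvariant n R) (hDI : DownstreamImpartial n R)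
    (z : Fin n) (hz : (z : ℕ) = 0)
    (δ : ℝ) (hδ : δ = R (fun j => if j = z then 1 else 0) z)
    (c : ℝ) (hc : 0 ≤ c) :
    R (fun j => if j = z then c else 0) z = δ * c ∧
    ∀ k : Fin n, z < k →
      R (fun j => if j = z then c else 0) k = (1 - δ) * c / ((n : ℝ) - 1) := by
  have hne : ((n : ℝ) - 1) ≠ 0 := by
    have : (2 : ℝ) ≤ (n : ℝ) := by exact_mod_cast hn
    linarith
  rcases eq_or_lt_of_le hc with hc0 | hc0
  · have hp : (fun j : Fin n => if j = z then c else 0) = (fun _ => (0:ℝ)) := by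
      funext j; rw [← hc0]; simp
    rw [hp]
    constructor
    · rw [aux_zero_alloc R hR z, ← hc0]; ring
    · intro k _; rw [aux_zero_alloc R hR k, ← hc0]; ring
  -- c > 0
  have hone : Nonneg n (fun j : Fin n => if j = z then 1 else 0) := by
    intro j; by_cases h : j = z <;> simp [h]
  have hpn : Nonneg n (fun j : Fin n => if j = z then c else 0) := by
    intro j; by_cases h : j = z <;> simp [h, hc]
  have hscale := hSI _ hone c hc
  have hpeq : (fun j : Fin n => c * (if j = z then 1 else 0)) =
      (fun j : Fin n => if j = z then c else 0) := by
    funext j; by_cases h : j = z <;> simp [h]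
  rw [hpeq] at hscale
  have hRz : R (fun j : Fin n => if j = z then c else 0) z = δ * c := by
    rw [hscale z, ← hδ]; ring
  have heq : ∀ k l : Fin n, z < k → z < l →
      R (fun j : Fin n => if j = z then c else 0) k =
      R (fun j : Fin n => if j = z then c else 0) l := by
    intro k l hk hl
    have hdi := hDI (fun _ => 0) (fun j => if j = z then c else 0)
      (fun _ => le_refl 0) hpn z (by simpa using hc0)
      (fun j hj => by simp [hj]) (fun k l _ _ => rfl) k l hk hl
    rw [aux_zero_alloc R hR k, aux_zero_alloc R hR l] at hdi
    linarith
  have heff := (hR _ hpn).2.2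
  have hsum : (∑ j, (fun j : Fin n => if j = z then c else 0) j) = c := by
    simpa using Finset.sum_ite_eq' Finset.univ z (fun _ => c)
  rw [hsum] at heff
  set p : Fin n → ℝ := fun j : Fin n => if j = z then c else 0 with hpdef
  have hw : (⟨1, by omega⟩ : Fin n) > z := by
    simp [Fin.lt_def, hz]
  set w : Fin n := ⟨1, by omega⟩ with hwdef
  have herase : Finset.univ.erase z = Finset.Ioi z := by
    ext x
    simp only [Finset.mem_erase, Finset.mem_univ, and_true, Finset.mem_Ioi, Fin.lt_def, hz]
    rw [← Fin.val_ne_iff]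
    omega
  have hsplit : R p z + ∑ j ∈ Finset.univ.erase z, R p j = ∑ j, R p j :=
    Finset.add_sum_erase _ _ (Finset.mem_univ z)
  have hconst : ∑ j ∈ Finset.univ.erase z, R p j = ((n : ℝ) - 1) * R p w := by
    rw [herase]
    rw [Finset.sum_congr rfl (fun k hk => heq k w (Finset.mem_Ioi.mp hk) hw)]
    rw [Finset.sum_const, Fin.card_Ioi, nsmul_eq_mul]
    have h1 : n - 1 - (z : ℕ) = n - 1 := by omega
    rw [h1, Nat.cast_sub (by omega : 1 ≤ n), Nat.cast_one]
  have hRw : R p w = (1 - δ) * c / ((n : ℝ) - 1) := by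
    have : δ * c + ((n : ℝ) - 1) * R p w = c := by
      rw [← hconst, ← hRz]; rw [hsplit]; exact heff
    field_simp
    linarith
  exact ⟨hRz, fun k hk => by rw [heq k w hk hw, hRw]⟩

lemma aux_main {n : ℕ} (hn : 2 ≤ n) (R : (Fin n → ℝ) → (Fin n → ℝ)) (hR : IsRule n R)
    (hSI : ScaleInvariant n R) (hDI : DownstreamImpartial n R)
    (hUI : UpstreamInvariant n R) (hET : EqualTreatmentOfEqualUpstreamTotalInflow n R)
    (z : Fin n) (hz : (z : ℕ) = 0)
    (δ : ℝ) (hδ : δ = R (fun j => if j = z then 1 else 0) z)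
    (e : Fin n → ℝ) (he : Nonneg n e) (i : Fin n) :
    R e i = δ * e i +
      (1 - δ) * (((i : ℕ) : ℝ) * e i + ∑ j ∈ Finset.Iio i, e j) / ((n : ℝ) - 1) := by
  have hne : ((n : ℝ) - 1) ≠ 0 := by
    have : (2 : ℝ) ≤ (n : ℝ) := by exact_mod_cast hn
    linarith
  by_cases hiz : i = z
  · -- first agent
    subst hiz
    have hIio : Finset.Iio i = ∅ := by
      ext x
      simp only [Finset.mem_Iio, Fin.lt_def, hz, Finset.notMem_empty, iff_false]
      omega
    have hnn : Nonneg n (fun j : Fin n => if j = i then e i else 0) := by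
      intro j; by_cases h : j = i <;> simp [h, he i]
    have het := hET e (fun j => if j = i then e i else 0) he hnn i (by simp)
      (by rw [hIio]; simp)
    rw [het, (aux_point hn R hR hSI hDI i hz δ hδ (e i) (he i)).1, hIio, hz]
    simp
  · -- i is not the first agent
    have hzi : z < i := by
      rw [Fin.lt_def, hz]
      rcases Nat.eq_zero_or_pos (i : ℕ) with h | h
      · exact absurd (Fin.ext (by rw [h, hz])) hiz
      · exact h
    set S : ℝ := ∑ j ∈ Finset.Iio i, e j with hSdef
    set c : ℝ := e i with hcdef
    have hS0 : 0 ≤ S := Finset.sum_nonneg fun j _ => he j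
    have hc0 : 0 ≤ c := he i
    have hziN : z ≠ i := ne_of_lt hzi
    set E : Fin n → ℝ := fun j => if j = z then S else if j = i then c else 0 with hEdef
    have hEnn : Nonneg n E := by
      intro j; by_cases h1 : j = z
      · simp [hEdef, h1, hS0]
      · by_cases h2 : j = i <;> simp [hEdef, h1, h2, hiz, hc0]
    have hEdec : ∀ j : Fin n,
        E j = (if j = z then S else 0) + (if j = i then c else 0) := by
      intro j
      by_cases h1 : j = z
      · subst h1; simp [hEdef, hziN]
      · by_cases h2 : j = i <;> simp [hEdef, h1, h2, hiz]
    have hEi : E i = c := by simp [hEdef, hiz]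
    have hEIio : ∑ j ∈ Finset.Iio i, E j = S := by
      rw [Finset.sum_congr rfl fun j _ => hEdec j, Finset.sum_add_distrib,
        Finset.sum_ite_eq' _ z (fun _ => S), Finset.sum_ite_eq' _ i (fun _ => c),
        if_pos (Finset.mem_Iio.mpr hzi), if_neg (by simp)]
      ring
    have hRE : R e i = R E i := hET e E he hEnn i hEi.symm (by rw [hEIio])
    rw [hRE]
    by_cases hc : c = 0
    · have hEp : E = (fun j : Fin n => if j = z then S else 0) := by
        funext j
        by_cases h1 : j = z
        · simp [hEdef, h1]
        · by_cases h2 : j = i <;> simp [hEdef, h1, h2, hc]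
      rw [hEp, (aux_point hn R hR hSI hDI z hz δ hδ S hS0).2 i hzi, hc]
      ring
    · have hcpos : 0 < c := lt_of_le_of_ne hc0 (Ne.symm hc)
      have hpS := aux_point hn R hR hSI hDI z hz δ hδ S hS0
      have hpSnn : Nonneg n (fun j : Fin n => if j = z then S else 0) := by
        intro j; by_cases h : j = z <;> simp [h, hS0]
      -- upstream agents
      have hup : ∀ k, k < i → R (fun j : Fin n => if j = z then S else 0) k = R E k := by
        intro k hk
        refine hUI _ E hpSnn hEnn i ?_ ?_ k hk
        · simp [hEdef, Ne.symm hziN, hiz, hcpos]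
        · intro j hj
          by_cases h1 : j = z
          · simp [hEdef, h1]
          · simp [hEdef, h1, hj]
      -- downstream agents
      have hSc0 : 0 ≤ S + c := by linarith
      have hpScnn : Nonneg n (fun j : Fin n => if j = z then S + c else 0) := by
        intro j; by_cases h : j = z <;> simp [h, hSc0]
      have hdown : ∀ k, i < k → R E k = (1 - δ) * (S + c) / ((n : ℝ) - 1) := by
        intro k hik
        have hzk : z < k := lt_trans hzi hik
        have hkz : k ≠ z := ne_of_gt hzk
        have hki : k ≠ i := ne_of_gt hik
        have hsum1 : ∑ j ∈ Finset.Iio k, E j = S + c := by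
          rw [Finset.sum_congr rfl fun j _ => hEdec j, Finset.sum_add_distrib,
            Finset.sum_ite_eq' _ z (fun _ => S), Finset.sum_ite_eq' _ i (fun _ => c),
            if_pos (Finset.mem_Iio.mpr hzk), if_pos (Finset.mem_Iio.mpr hik)]
        have hsum2 : ∑ j ∈ Finset.Iio k, (fun j : Fin n => if j = z then S + c else 0) j
            = S + c := by
          rw [Finset.sum_ite_eq' _ z (fun _ => S + c), if_pos (Finset.mem_Iio.mpr hzk)]
        have het := hET E (fun j => if j = z then S + c else 0) hEnn hpScnn k
          (by simp [hEdef, hkz, hki]) (by rw [hsum1, hsum2])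
        rw [het, (aux_point hn R hR hSI hDI z hz δ hδ (S + c) hSc0).2 k hzk]
      -- efficiency
      have heff := (hR E hEnn).2.2
      have hEsum : ∑ j, E j = S + c := by
        rw [Finset.sum_congr rfl fun j _ => hEdec j, Finset.sum_add_distrib,
          Finset.sum_ite_eq' _ z (fun _ => S), Finset.sum_ite_eq' _ i (fun _ => c),
          if_pos (Finset.mem_univ z), if_pos (Finset.mem_univ i)]
      rw [hEsum] at heff
      -- split the total sum
      have hdisj : Disjoint (Finset.Iic i) (Finset.Ioi i) := by
        rw [Finset.disjoint_left]
        intro a ha ha'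
        exact absurd (Finset.mem_Iic.mp ha) (not_le.mpr (Finset.mem_Ioi.mp ha'))
      have huniv : Finset.Iic i ∪ Finset.Ioi i = Finset.univ := by
        ext x
        simp only [Finset.mem_union, Finset.mem_Iic, Finset.mem_Ioi, Finset.mem_univ, iff_true]
        exact le_or_gt x i
      have hsplit : ∑ j, R E j =
          (R E i + ∑ j ∈ Finset.Iio i, R E j) + ∑ j ∈ Finset.Ioi i, R E j := by
        rw [← huniv, Finset.sum_union hdisj, ← Finset.Iio_insert,
          Finset.sum_insert (by simp : i ∉ Finset.Iio i)]
      -- upstream sum value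
      have hupsum : ∑ j ∈ Finset.Iio i, R E j
          = δ * S + (((i : ℕ) : ℝ) - 1) * ((1 - δ) * S / ((n : ℝ) - 1)) := by
        rw [← Finset.sum_congr rfl fun k hk => hup k (Finset.mem_Iio.mp hk)]
        rw [← Finset.add_sum_erase _ _ (Finset.mem_Iio.mpr hzi), hpS.1]
        congr 1
        have hc1 : ∀ k ∈ (Finset.Iio i).erase z,
            R (fun j : Fin n => if j = z then S else 0) k
              = (1 - δ) * S / ((n : ℝ) - 1) := by
          intro k hk
          obtain ⟨hk1, _⟩ := Finset.mem_erase.mp hk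
          refine hpS.2 k ?_
          rw [Fin.lt_def, hz]
          rcases Nat.eq_zero_or_pos (k : ℕ) with h | h
          · exact absurd (Fin.ext (by rw [h, hz])) hk1
          · exact h
        rw [Finset.sum_congr rfl hc1, Finset.sum_const,
          Finset.card_erase_of_mem (Finset.mem_Iio.mpr hzi), Fin.card_Iio, nsmul_eq_mul]
        congr 1
        rw [Nat.cast_sub (by omega : 1 ≤ (i : ℕ)), Nat.cast_one]
      have hdownsum : ∑ j ∈ Finset.Ioi i, R E j
          = ((n : ℝ) - 1 - ((i : ℕ) : ℝ)) * ((1 - δ) * (S + c) / ((n : ℝ) - 1)) := by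
        rw [Finset.sum_congr rfl fun k hk => hdown k (Finset.mem_Ioi.mp hk),
          Finset.sum_const, Fin.card_Ioi, nsmul_eq_mul]
        congr 1
        rw [Nat.cast_sub (by omega : (i : ℕ) ≤ n - 1), Nat.cast_sub (by omega : 1 ≤ n),
          Nat.cast_one]
      rw [hsplit, hupsum, hdownsum] at heff
      have hgoal : R E i = S + c - (δ * S + (((i : ℕ) : ℝ) - 1) * ((1 - δ) * S / ((n : ℝ) - 1)))
          - ((n : ℝ) - 1 - ((i : ℕ) : ℝ)) * ((1 - δ) * (S + c) / ((n : ℝ) - 1)) := by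
        linarith
      rw [hgoal]
      field_simp
      ring

/-- Theorem 5 in the paper: scale invariance, downstream impartiality,
upstream invariance and equal treatment of equal upstream total inflow characterize the
partial compromise rules `δ R^NT + (1-δ) R^EPT`. -/
theorem partial_compromise_characterization (n : ℕ) (hn : 2 ≤ n)
    (R : (Fin n → ℝ) → (Fin n → ℝ)) (hR : IsRule n R) :
    (ScaleInvariant n R ∧ DownstreamImpartial n R ∧ UpstreamInvariant n R ∧
      EqualTreatmentOfEqualUpstreamTotalInflow n R) ↔
    (∃ δ : ℝ, 0 ≤ δ ∧ δ ≤ 1 ∧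
      ∀ e : Fin n → ℝ, Nonneg n e → ∀ i, R e i = δ * NT n e i + (1 - δ) * EPT n e i) := by
  have hne : ((n : ℝ) - 1) ≠ 0 := by
    have : (2 : ℝ) ≤ (n : ℝ) := by exact_mod_cast hn
    linarith
  constructor
  · rintro ⟨hSI, hDI, hUI, hET⟩
    set z : Fin n := ⟨0, by omega⟩ with hzdef
    have hz : (z : ℕ) = 0 := rfl
    set δ : ℝ := R (fun j => if j = z then 1 else 0) z with hδ
    have hone : Nonneg n (fun j : Fin n => if j = z then 1 else 0) := by
      intro j; by_cases h : j = z <;> simp [h]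
    have hIic : Finset.Iic z = {z} := by
      ext x
      simp only [Finset.mem_Iic, Finset.mem_singleton, Fin.le_def, hz, Nat.le_zero]
      rw [Fin.ext_iff, hz]
    obtain ⟨hpos, hfeas, _⟩ := hR _ hone
    refine ⟨δ, hpos z, ?_, ?_⟩
    · have := hfeas z
      rw [hIic, Finset.sum_singleton, Finset.sum_singleton] at this
      simpa using this
    · intro e he i
      rw [aux_main hn R hR hSI hDI hUI hET z hz δ hδ e he i, NT, EPT]
      field_simp
      ring
  · rintro ⟨δ, h0, h1, h⟩
    have hform : ∀ e : Fin n → ℝ, Nonneg n e → ∀ i : Fin n,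
        R e i = δ * e i + (1 - δ) *
          ((1 - ((n : ℝ) - 1 - (i : ℕ)) / ((n : ℝ) - 1)) * e i +
            (1 / ((n : ℝ) - 1)) * ∑ j ∈ Finset.Iio i, e j) := by
      intro e he i
      simpa [NT, EPT] using h e he i
    refine ⟨?_, ?_, ?_, ?_⟩
    · -- scale invariance
      intro e he γ hγ i
      have hng : Nonneg n (fun j => γ * e j) := fun j => mul_nonneg hγ (he j)
      rw [hform _ hng i, hform e he i, ← Finset.mul_sum]
      ring
    · -- downstream impartiality
      intro e e' he he' i hlt hoff _ k l hik hil
      have key : ∀ m : Fin n, i < m →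
          R e' m - R e m = (1 - δ) * (1 / ((n : ℝ) - 1)) * (e' i - e i) := by
        intro m him
        have hem : e m = e' m := hoff m (ne_of_gt him)
        have hsum : ∑ j ∈ Finset.Iio m, e' j - ∑ j ∈ Finset.Iio m, e j = e' i - e i := by
          rw [← Finset.sum_sub_distrib]
          rw [Finset.sum_eq_single_of_mem i (Finset.mem_Iio.mpr him)
            (fun j _ hji => by rw [hoff j hji]; ring)]
        rw [hform e' he' m, hform e he m, ← hem]
        linear_combination ((1 - δ) * (1 / ((n : ℝ) - 1))) * hsum
      rw [key k hik, key l hil]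
    · -- upstream invariance
      intro e e' he he' i hlt hoff k hki
      rw [hform e he k, hform e' he' k, hoff k (ne_of_lt hki),
        Finset.sum_congr rfl fun j hj =>
          hoff j (ne_of_lt (lt_trans (Finset.mem_Iio.mp hj) hki))]
    · -- equal treatment
      intro e e' he he' i h1 h2
      rw [hform e he i, hform e' he' i, h1, h2]
end

section
/- For each α ∈ [0,1]^{n-1} (with α_n := 1), the rule R^α defined by R^α_i(e) = α_i e_i + Σ_{k<i} (1-α_k)e_k/(n-k) satisfies balance if and only if α_k = 1/(n-k+1) for every k ∈ {1,...,n-1}. -/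
open Finset

lemma ralpha_self (n : ℕ) (α e : Fin n → ℝ) (i : Fin n)
    (h0 : ∀ j, j ≠ i → e j = 0) : Ralpha n α e i = α i * e i := by
  unfold Ralpha
  have : ∑ k ∈ Finset.Iio i, (1 - α k) * e k / ((n : ℝ) - 1 - (k : ℕ)) = 0 := by
    apply Finset.sum_eq_zero
    intro j hj
    rw [h0 j (by exact ne_of_lt (Finset.mem_Iio.mp hj))]
    ring
  rw [this]; ring

lemma ralpha_sum_Ioi (n : ℕ) (α e : Fin n → ℝ) (i : Fin n)
    (hi : (i : ℕ) < n - 1) (h0 : ∀ j, j ≠ i → e j = 0) :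
    ∑ k ∈ Finset.Ioi i, Ralpha n α e k = (1 - α i) * e i := by
  have hle : (i : ℕ) + 2 ≤ n := by omega
  have hd : ((n : ℝ) - 1 - (i : ℕ)) ≠ 0 := by
    have : ((i : ℕ) : ℝ) + 2 ≤ (n : ℝ) := by exact_mod_cast hle
    intro h; nlinarith
  have hterm : ∀ k ∈ Finset.Ioi i,
      Ralpha n α e k = (1 - α i) * e i / ((n : ℝ) - 1 - (i : ℕ)) := by
    intro k hk
    have hik : i < k := Finset.mem_Ioi.mp hk
    unfold Ralpha
    rw [h0 k (by exact (ne_of_lt hik).symm)]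
    rw [Finset.sum_eq_single i]
    · ring
    · intro j _ hj
      rw [h0 j hj]; ring
    · intro hmem
      exact absurd (Finset.mem_Iio.mpr hik) hmem
  rw [Finset.sum_congr rfl hterm, Finset.sum_const, Fin.card_Ioi]
  have hcast : ((n - 1 - (i : ℕ) : ℕ) : ℝ) = (n : ℝ) - 1 - (i : ℕ) := by
    have h1 : 1 + (i : ℕ) ≤ n := by omega
    push_cast [Nat.sub_sub, Nat.cast_sub h1]
    ring
  rw [nsmul_eq_mul, hcast]
  field_simp

/-- `R^α` satisfies balance iff `α_k = 1/(n-k+1)` for every `k ≤ n-1`. -/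
theorem ralpha_balanced_iff (n : ℕ) (hn : 0 < n) (α : Fin n → ℝ) (hα : AlphaOK n α) :
    IsBalanced n (fun e => Ralpha n α e) ↔
    (∀ k : Fin n, (k : ℕ) < n - 1 → α k = 1 / ((n : ℝ) - (k : ℕ))) := by
  constructor
  · intro hbal k hk
    have hle : (k : ℕ) + 2 ≤ n := by omega
    have hcast : ((k : ℕ) : ℝ) + 2 ≤ (n : ℝ) := by exact_mod_cast hle
    have hd : ((n : ℝ) - 1 - (k : ℕ)) ≠ 0 := by intro h; nlinarith
    have hd2 : ((n : ℝ) - (k : ℕ)) ≠ 0 := by intro h; nlinarith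
    set e : Fin n → ℝ := fun j => if j = k then 1 else 0 with he
    have h0 : ∀ j, j ≠ k → e j = 0 := fun j hj => by simp [he, hj]
    have hnn : Nonneg n e := by intro j; by_cases h : j = k <;> simp [he, h]
    have hpos : 0 < e k := by simp [he]
    have := hbal e hnn k hk hpos h0
    simp only at this
    rw [ralpha_self n α e k h0, ralpha_sum_Ioi n α e k hk h0] at this
    have hek : e k = 1 := by simp [he]
    rw [hek] at this
    field_simp at this ⊢
    nlinarith [this]
  · intro hα' e hnn i hi hpos h0
    simp only
    rw [ralpha_self n α e i h0, ralpha_sum_Ioi n α e i hi h0]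
    have hαi := hα' i hi
    have hle : (i : ℕ) + 2 ≤ n := by omega
    have hcast : ((i : ℕ) : ℝ) + 2 ≤ (n : ℝ) := by exact_mod_cast hle
    have hd : ((n : ℝ) - 1 - (i : ℕ)) ≠ 0 := by intro h; nlinarith
    have hd2 : ((n : ℝ) - (i : ℕ)) ≠ 0 := by intro h; nlinarith
    rw [hαi]
    field_simp
    ring
end

section
/- For each α ∈ [0,1]^{n-1} (with α_n := 1), the rule R^α satisfies progressivity (R_i(e) ≤ (1/(n-i)) Σ_{k>i} R_k(e) whenever e has a unique positive coordinate i < n) if and only if α_k ≤ 1/(n-k+1) for every k ∈ {1,...,n-1}. -/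
open Finset

lemma ralpha_single (n : ℕ) (α : Fin n → ℝ) (e : Fin n → ℝ) (i : Fin n)
    (hi : (i : ℕ) < n - 1) (h0 : ∀ j, j ≠ i → e j = 0) :
    Ralpha n α e i = α i * e i ∧
    ∑ k ∈ Finset.Ioi i, Ralpha n α e k =
      ((n : ℝ) - 1 - (i : ℕ)) * ((1 - α i) * e i / ((n : ℝ) - 1 - (i : ℕ))) := by
  constructor
  · unfold Ralpha
    rw [Finset.sum_eq_zero, add_zero]
    intro k hk
    rw [h0 k (by simp at hk; exact ne_of_lt hk), mul_zero, zero_div]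
  · have hval : ∀ k ∈ Finset.Ioi i, Ralpha n α e k =
        (1 - α i) * e i / ((n : ℝ) - 1 - (i : ℕ)) := by
      intro k hk
      simp only [Finset.mem_Ioi] at hk
      unfold Ralpha
      rw [h0 k (ne_of_gt hk), mul_zero, zero_add]
      rw [Finset.sum_eq_single i]
      · intro b hb hbne
        rw [h0 b hbne, mul_zero, zero_div]
      · intro h
        exact absurd (Finset.mem_Iio.mpr hk) h
    rw [Finset.sum_congr rfl hval, Finset.sum_const, nsmul_eq_mul, Fin.card_Ioi]
    congr 1
    have : (i : ℕ) ≤ n - 1 := le_of_lt hi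
    push_cast [Nat.sub_sub, Nat.cast_sub (by omega : 1 + (i : ℕ) ≤ n)]
    ring

/-- `R^α` satisfies progressivity iff `α_k ≤ 1/(n-k+1)` for every `k ≤ n-1`. -/
theorem ralpha_progressive_iff (n : ℕ) (hn : 0 < n) (α : Fin n → ℝ) (hα : AlphaOK n α) :
    Progressive n (fun e => Ralpha n α e) ↔
    (∀ k : Fin n, (k : ℕ) < n - 1 → α k ≤ 1 / ((n : ℝ) - (k : ℕ))) := by
  constructor
  · intro hP k hk
    set e : Fin n → ℝ := fun j => if j = k then 1 else 0 with he
    have h0 : ∀ j, j ≠ k → e j = 0 := fun j hj => by simp [he, hj]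
    have hNN : Nonneg n e := by intro j; by_cases h : j = k <;> simp [he, h]
    have hek : 0 < e k := by simp [he]
    have := hP e hNN k hk hek h0
    obtain ⟨h1, h2⟩ := ralpha_single n α e k hk h0
    simp only [he] at this h1 h2
    rw [h1, h2] at this
    have hc : (0 : ℝ) < (n : ℝ) - 1 - (k : ℕ) := by
      have : (k : ℕ) + 1 < n := by omega
      have : ((k : ℕ) : ℝ) + 1 < (n : ℝ) := by exact_mod_cast this
      linarith
    simp only [if_true] at this
    have hkey : α k * ((n : ℝ) - (k : ℕ)) ≤ 1 := by
      have h3 : α k ≤ (1 - α k) / ((n : ℝ) - 1 - (k : ℕ)) := by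
        calc α k = α k * 1 := (mul_one _).symm
        _ ≤ 1 / ((n : ℝ) - 1 - (k : ℕ)) *
            (((n : ℝ) - 1 - (k : ℕ)) * ((1 - α k) * 1 / ((n : ℝ) - 1 - (k : ℕ)))) := this
        _ = (1 - α k) / ((n : ℝ) - 1 - (k : ℕ)) := by field_simp
      rw [le_div_iff₀ hc] at h3
      nlinarith [h3]
    have hnk : (0 : ℝ) < (n : ℝ) - (k : ℕ) := by linarith
    rw [le_div_iff₀ hnk]
    linarith
  · intro hα' e hNN i hi hei h0
    obtain ⟨h1, h2⟩ := ralpha_single n α e i hi h0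
    simp only []
    rw [h1, h2]
    have hc : (0 : ℝ) < (n : ℝ) - 1 - (i : ℕ) := by
      have : (i : ℕ) + 1 < n := by omega
      have : ((i : ℕ) : ℝ) + 1 < (n : ℝ) := by exact_mod_cast this
      linarith
    have hai := hα' i hi
    rw [le_div_iff₀ (by linarith : (0:ℝ) < (n : ℝ) - (i : ℕ))] at hai
    have hstep : α i * ((n : ℝ) - 1 - (i : ℕ)) ≤ 1 - α i := by nlinarith [hai]
    have hgoal : α i * e i * ((n : ℝ) - 1 - (i : ℕ)) ≤ (1 - α i) * e i := by
      nlinarith [hstep, hei.le]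
    calc α i * e i = (α i * e i * ((n : ℝ) - 1 - (i : ℕ))) / ((n : ℝ) - 1 - (i : ℕ)) := by
          field_simp
      _ ≤ ((1 - α i) * e i) / ((n : ℝ) - 1 - (i : ℕ)) := by
          gcongr
      _ = 1 / ((n : ℝ) - 1 - (i : ℕ)) *
          (((n : ℝ) - 1 - (i : ℕ)) * ((1 - α i) * e i / ((n : ℝ) - 1 - (i : ℕ)))) := by
          field_simp
end

section
/- For each α ∈ [0,1]^{n-1} (with α_n := 1), the rule R^α satisfies regressivity (R_i(e) ≥ (1/(n-i)) Σ_{k>i} R_k(e) whenever e has a unique positive coordinate i < n) if and only if α_k ≥ 1/(n-k+1) for every k ∈ {1,...,n-1}. -/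
open Finset

section Aux

lemma ralpha_single_self (n : ℕ) (α e : Fin n → ℝ) (i : Fin n)
    (he0 : ∀ j, j ≠ i → e j = 0) : Ralpha n α e i = α i * e i := by
  unfold Ralpha
  rw [Finset.sum_eq_zero, add_zero]
  intro j hj
  rw [he0 j (ne_of_lt (Finset.mem_Iio.mp hj))]
  ring

lemma ralpha_single_sum (n : ℕ) (α e : Fin n → ℝ) (i : Fin n)
    (hi : (i : ℕ) < n - 1) (he0 : ∀ j, j ≠ i → e j = 0) :
    ∑ k ∈ Finset.Ioi i, Ralpha n α e k = (1 - α i) * e i := by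
  have hc : (0 : ℝ) < (n : ℝ) - 1 - (i : ℕ) := by
    have : ((i : ℕ) : ℝ) < ((n - 1 : ℕ) : ℝ) := by exact_mod_cast hi
    have h1 : (1 : ℕ) ≤ n := by omega
    rw [Nat.cast_sub h1] at this
    push_cast at this ⊢
    linarith
  have hterm : ∀ k ∈ Finset.Ioi i,
      Ralpha n α e k = (1 - α i) * e i / ((n : ℝ) - 1 - (i : ℕ)) := by
    intro k hk
    have hik : i < k := Finset.mem_Ioi.mp hk
    unfold Ralpha
    rw [he0 k (ne_of_gt hik), mul_zero, zero_add]
    rw [Finset.sum_eq_single_of_mem i (Finset.mem_Iio.mpr hik)]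
    intro j _ hj
    rw [he0 j hj]; ring
  rw [Finset.sum_congr rfl hterm, Finset.sum_const, Fin.card_Ioi, nsmul_eq_mul]
  have hcast : ((n - 1 - (i : ℕ) : ℕ) : ℝ) = (n : ℝ) - 1 - (i : ℕ) := by
    have h1 : (1 : ℕ) ≤ n := by omega
    have h2 : (i : ℕ) ≤ n - 1 := Nat.le_of_lt hi
    rw [Nat.cast_sub h2, Nat.cast_sub h1]
    push_cast; ring
  rw [hcast]
  field_simp

end Aux

/-- `R^α` satisfies regressivity iff `α_k ≥ 1/(n-k+1)` for every `k ≤ n-1`. -/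
theorem ralpha_regressive_iff (n : ℕ) (hn : 0 < n) (α : Fin n → ℝ) (hα : AlphaOK n α) :
    Regressive n (fun e => Ralpha n α e) ↔
    (∀ k : Fin n, (k : ℕ) < n - 1 → 1 / ((n : ℝ) - (k : ℕ)) ≤ α k) := by
  constructor
  · intro hreg k hk
    set e : Fin n → ℝ := fun j => if j = k then (1:ℝ) else 0 with he
    have hne : Nonneg n e := by
      intro j; by_cases hj : j = k <;> simp [he, hj]
    have he0 : ∀ j, j ≠ k → e j = 0 := by intro j hj; simp [he, hj]
    have hek : e k = 1 := by simp [he]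
    have hmain := hreg e hne k hk (by rw [hek]; norm_num) he0
    simp only [] at hmain
    rw [ralpha_single_self n α e k he0, ralpha_single_sum n α e k hk he0, hek,
      mul_one, mul_one] at hmain
    have hc : (0 : ℝ) < (n : ℝ) - 1 - (k : ℕ) := by
      have : ((k : ℕ) : ℝ) < ((n - 1 : ℕ) : ℝ) := by exact_mod_cast hk
      have h1 : (1 : ℕ) ≤ n := by omega
      rw [Nat.cast_sub h1] at this
      push_cast at this ⊢
      linarith
    have hpos : (0 : ℝ) < (n : ℝ) - (k : ℕ) := by linarith
    rw [div_le_iff₀ hpos]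
    rw [ge_iff_le, one_div, inv_mul_le_iff₀ hc] at hmain
    nlinarith
  · intro h e hne i hi hei he0
    simp only []
    rw [ge_iff_le, ralpha_single_self n α e i he0, ralpha_single_sum n α e i hi he0]
    have hc : (0 : ℝ) < (n : ℝ) - 1 - (i : ℕ) := by
      have : ((i : ℕ) : ℝ) < ((n - 1 : ℕ) : ℝ) := by exact_mod_cast hi
      have h1 : (1 : ℕ) ≤ n := by omega
      rw [Nat.cast_sub h1] at this
      push_cast at this ⊢
      linarith
    have hpos : (0 : ℝ) < (n : ℝ) - (i : ℕ) := by linarith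
    have hk := h i hi
    rw [div_le_iff₀ hpos] at hk
    rw [one_div, inv_mul_le_iff₀ hc]
    nlinarith
end

section
/- The compromise rule R^λ = λ R^NT + (1-λ) R^EFT satisfies progressivity if and only if λ ≤ 1/n, and satisfies regressivity if and only if λ ≥ 1/2 (for n ≥ 2). -/
open Finset

lemma comp_aux (n : ℕ) (l : ℝ) (e : Fin n → ℝ) (i : Fin n) (hi : (i : ℕ) < n - 1)
    (hz : ∀ j, j ≠ i → e j = 0) :
    (l * NT n e i + (1 - l) * EFT n e i = l * e i) ∧
    (∑ k ∈ Finset.Ioi i, (l * NT n e k + (1 - l) * EFT n e k) = (1 - l) * e i) := by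
  have hn2 : 2 ≤ n := by omega
  have hd0 : (0:ℝ) < (n : ℝ) - 1 - (i : ℕ) := by
    have : ((i : ℕ) : ℝ) + 1 < (n : ℝ) := by exact_mod_cast (by omega : (i : ℕ) + 1 < n)
    linarith
  constructor
  · have hEFT : EFT n e i = 0 := by
      unfold EFT
      rw [Finset.sum_eq_zero, if_neg (by omega)]
      · ring
      · intro j hj
        rw [hz j (by exact ne_of_lt (Finset.mem_Iio.mp hj))]
        simp
    rw [hEFT]; unfold NT; ring
  · have hterm : ∀ k ∈ Finset.Ioi i,
        l * NT n e k + (1 - l) * EFT n e k = (1 - l) * (e i / ((n : ℝ) - 1 - (i : ℕ))) := by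
      intro k hk
      have hik : i < k := Finset.mem_Ioi.mp hk
      have hek : e k = 0 := hz k (by exact (ne_of_lt hik).symm)
      have hsum : ∑ j ∈ Finset.Iio k, e j / ((n : ℝ) - 1 - (j : ℕ))
          = e i / ((n : ℝ) - 1 - (i : ℕ)) := by
        apply Finset.sum_eq_single_of_mem i (Finset.mem_Iio.mpr hik)
        intro b _ hb
        rw [hz b hb]; simp
      unfold NT EFT
      rw [hek, hsum]
      split <;> ring
    rw [Finset.sum_congr rfl hterm, Finset.sum_const, Fin.card_Ioi, nsmul_eq_mul]
    have hc : ((n - 1 - (i : ℕ) : ℕ) : ℝ) = (n : ℝ) - 1 - (i : ℕ) := by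
      have h1 : n - 1 - (i : ℕ) = n - (1 + (i : ℕ)) := by omega
      rw [h1, Nat.cast_sub (by omega)]
      push_cast; ring
    rw [hc]
    field_simp

/-- the compromise rule `R^λ` is progressive iff `λ ≤ 1/n`, and
regressive iff `λ ≥ 1/2`. -/
theorem compromise_progressive_regressive_iff (n : ℕ) (hn : 2 ≤ n)
    (l : ℝ) (hl0 : 0 ≤ l) (hl1 : l ≤ 1) :
    (Progressive n (fun e i => l * NT n e i + (1 - l) * EFT n e i) ↔ l ≤ 1 / (n : ℝ)) ∧
    (Regressive n (fun e i => l * NT n e i + (1 - l) * EFT n e i) ↔ 1 / 2 ≤ l) := by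
  have hn2 := hn
  have hn0 : (0:ℝ) < n := by positivity
  have hnR : (2:ℝ) ≤ (n:ℝ) := by exact_mod_cast hn2
  constructor
  · constructor
    · intro hP
      set i0 : Fin n := ⟨0, by omega⟩ with hi0
      set e : Fin n → ℝ := fun j => if j = i0 then 1 else 0 with he
      have hzz : ∀ j, j ≠ i0 → e j = 0 := by intro j hj; simp [he, hj]
      have hei : e i0 = 1 := by simp [he]
      have hnn : Nonneg n e := by intro j; simp [he]; split <;> norm_num
      have hlt : (i0 : ℕ) < n - 1 := by simp [hi0]; omega
      have h := hP e hnn i0 hlt (by rw [hei]; norm_num) hzz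
      have hc := comp_aux n l e i0 hlt hzz
      dsimp only at h
      rw [hc.1, hc.2, hei] at h
      have hv : ((i0 : ℕ) : ℝ) = 0 := by simp [hi0]
      rw [hv] at h
      have hd : (0:ℝ) < (n : ℝ) - 1 := by linarith
      have h2 : l * ((n:ℝ) - 1) ≤ 1 - l := by
        have h3 := mul_le_mul_of_nonneg_right h (le_of_lt hd)
        calc l * ((n:ℝ)-1) = l * 1 * ((n:ℝ)-1) := by ring
          _ ≤ 1/((n:ℝ)-1-0) * ((1-l)*1) * ((n:ℝ)-1) := h3
          _ = 1 - l := by rw [sub_zero]; field_simp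
      rw [le_div_iff₀ hn0]
      nlinarith [h2]
    · intro hln
      intro e hnn i hi hei hz
      have hc := comp_aux n l e i hi hz
      dsimp only
      rw [hc.1, hc.2]
      have hd0 : (0:ℝ) < (n : ℝ) - 1 - (i : ℕ) := by
        have : ((i : ℕ) : ℝ) + 1 < (n : ℝ) := by exact_mod_cast (by omega : (i : ℕ) + 1 < n)
        linarith
      have hln' : l * (n : ℝ) ≤ 1 := by
        rw [le_div_iff₀ hn0] at hln; linarith
      have hkey : l * ((n : ℝ) - 1 - (i : ℕ)) ≤ 1 - l := by
        have hi0 : (0:ℝ) ≤ ((i : ℕ) : ℝ) := by positivity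
        nlinarith
      rw [one_div, inv_mul_eq_div, le_div_iff₀ hd0]
      nlinarith [mul_le_mul_of_nonneg_right hkey hei.le]
  · constructor
    · intro hR
      set i0 : Fin n := ⟨n - 2, by omega⟩ with hi0
      set e : Fin n → ℝ := fun j => if j = i0 then 1 else 0 with he
      have hzz : ∀ j, j ≠ i0 → e j = 0 := by intro j hj; simp [he, hj]
      have hei : e i0 = 1 := by simp [he]
      have hnn : Nonneg n e := by intro j; simp [he]; split <;> norm_num
      have hlt : (i0 : ℕ) < n - 1 := by simp [hi0]; omega
      have h := hR e hnn i0 hlt (by rw [hei]; norm_num) hzz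
      have hc := comp_aux n l e i0 hlt hzz
      dsimp only at h
      rw [hc.1, hc.2, hei] at h
      have hv : ((i0 : ℕ) : ℝ) = (n : ℝ) - 2 := by
        simp only [hi0]
        rw [Nat.cast_sub (by omega)]; norm_num
      rw [hv] at h
      have : (n : ℝ) - 1 - ((n : ℝ) - 2) = 1 := by ring
      rw [this] at h
      linarith [h]
    · intro hl2
      intro e hnn i hi hei hz
      have hc := comp_aux n l e i hi hz
      dsimp only
      rw [hc.1, hc.2]
      have hd1 : (1:ℝ) ≤ (n : ℝ) - 1 - (i : ℕ) := by
        have : ((i : ℕ) : ℝ) + 1 ≤ (n : ℝ) - 1 := by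
          have h4 : ((i : ℕ) : ℝ) + 2 ≤ (n : ℝ) := by
            exact_mod_cast (by omega : (i : ℕ) + 2 ≤ n)
          linarith
        linarith
      have hd0 : (0:ℝ) < (n : ℝ) - 1 - (i : ℕ) := by linarith
      rw [ge_iff_le, one_div, inv_mul_eq_div, div_le_iff₀ hd0]
      nlinarith [mul_le_mul_of_nonneg_right (mul_le_mul_of_nonneg_left hd1 hl0) hei.le,
        mul_nonneg (by linarith : (0:ℝ) ≤ 2*l-1) hei.le]
end

section
/- The partial compromise rule R^δ = δ R^NT + (1-δ) R^EPT coincides with R^α for the parameter vector α with α_1 = δ and α_i = 1 − (n−i)(1−δ)/(n−1) for i ∈ {2,...,n-1}; that is, for all e ∈ ℝ^n_+ and all i, δ e_i + (1-δ) R^EPT_i(e) = α_i e_i + Σ_{k<i} (1-α_k)e_k/(n-k). -/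
open Finset

/-- the partial compromise rule `R^δ` coincides with `R^α` for
`α_1 = δ` and `α_i = 1 - (n-i)(1-δ)/(n-1)` for `i ∈ {2,...,n-1}`. -/
theorem partial_compromise_as_ralpha (n : ℕ) (hn : 2 ≤ n)
    (δ : ℝ) (hδ0 : 0 ≤ δ) (hδ1 : δ ≤ 1) (e : Fin n → ℝ) (he : Nonneg n e) (i : Fin n) :
    δ * NT n e i + (1 - δ) * EPT n e i =
      Ralpha n
        (fun k => if (k : ℕ) = 0 then δ else 1 - ((n : ℝ) - 1 - (k : ℕ)) * (1 - δ) / ((n : ℝ) - 1))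
        e i := by
  have hn1 : ((n : ℝ) - 1) ≠ 0 := by
    have : (2 : ℝ) ≤ (n : ℝ) := by exact_mod_cast hn
    linarith
  unfold NT EPT Ralpha
  have hsum : ∑ k ∈ Finset.Iio i,
      (1 - (if (k : ℕ) = 0 then δ else 1 - ((n : ℝ) - 1 - (k : ℕ)) * (1 - δ) / ((n : ℝ) - 1)))
        * e k / ((n : ℝ) - 1 - (k : ℕ)) =
      ∑ k ∈ Finset.Iio i, (1 - δ) * e k / ((n : ℝ) - 1) := by
    apply Finset.sum_congr rfl
    intro k hk
    have hki : k < i := Finset.mem_Iio.mp hk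
    have hkn : (k : ℕ) + 1 < n := lt_of_le_of_lt (Nat.succ_le_of_lt hki) i.isLt
    have hk1 : ((k : ℕ) : ℝ) + 1 ≤ (n : ℝ) - 1 := by
      have : ((k : ℕ) : ℝ) + 2 ≤ (n : ℝ) := by exact_mod_cast hkn
      linarith
    have hknk : ((n : ℝ) - 1 - (k : ℕ)) ≠ 0 := by linarith
    by_cases h0 : (k : ℕ) = 0
    · simp only [h0, if_pos]
      norm_num
    · simp only [h0, if_neg, if_false]
      field_simp
      ring
  rw [hsum, ← Finset.sum_div, ← Finset.mul_sum]
  by_cases hi0 : (i : ℕ) = 0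
  · simp only [hi0, if_pos, Nat.cast_zero]
    field_simp
    ring
  · simp only [hi0, if_neg, if_false]
    field_simp
    ring
end
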